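/- arXiv:1010.0729 — 2 statements merged into one kernel-verified Lean document; each statement's English description precedes it below -/
import Mathlib

section
/- Let B be the ball algebra on the closed unit ball of ℂ^d, and let J ⊆ B be a closed homogeneous ideal. Then the radical √J = {f ∈ B : f^n ∈ J for some n ≥ 1} is a closed subset of B (in the norm topology). -/
set_option maxHeartbeats 1000000


open MvPolynomial Metric

noncomputable section

abbrev Cd (d : ℕ) := EuclideanSpace ℂ (Fin d)

abbrev CBall (d : ℕ) : Set (Cd d) := Metric.closedBall (0 : Cd d) 1

instance (d : ℕ) : CompactSpace (CBall d) :=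
  isCompact_iff_compactSpace.mp (isCompact_closedBall _ _)

/-- The `i`-th coordinate function on the closed unit ball. -/
def coordFn (d : ℕ) (i : Fin d) : C(CBall d, ℂ) :=
  ⟨fun z => (z : Cd d) i, by exact (continuous_apply i).comp ((PiLp.continuous_ofLp _ _).comp continuous_subtype_val)⟩

/-- Restriction of a polynomial to the closed unit ball, as an element of
`C(closedBall, ℂ)`. -/
def polyMap (d : ℕ) : MvPolynomial (Fin d) ℂ →ₐ[ℂ] C(CBall d, ℂ) :=
  aeval (coordFn d)

/-- The ball algebra: the closure, in the Banach algebra of continuous functions on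
the closed unit ball of ℂ^d with the supremum norm, of the restrictions of
polynomials. -/
def ballAlg (d : ℕ) : Set C(CBall d, ℂ) := closure (Set.range (polyMap d))

/-- `J` is an ideal of the ball algebra `B`. -/
def IsIdealOfBallAlg (d : ℕ) (J : Set C(CBall d, ℂ)) : Prop :=
  J ⊆ ballAlg d ∧ (0 : C(CBall d, ℂ)) ∈ J ∧
    (∀ f ∈ J, ∀ g ∈ J, f + g ∈ J) ∧ (∀ f ∈ J, ∀ g ∈ ballAlg d, g * f ∈ J)

/-- The self-map of the closed ball given by `z ↦ t z` for `‖t‖ ≤ 1`. -/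
def dilatePt (d : ℕ) (t : ℂ) (ht : ‖t‖ ≤ 1) : C(CBall d, CBall d) :=
  ⟨fun z => ⟨t • (z : Cd d), by
      have hz : ‖(z : Cd d)‖ ≤ 1 := mem_closedBall_zero_iff.mp z.2
      show t • (z : Cd d) ∈ Metric.closedBall 0 1
      rw [mem_closedBall_zero_iff, norm_smul]
      exact mul_le_one₀ ht (norm_nonneg _) hz⟩,
    by exact Continuous.subtype_mk (continuous_subtype_val.const_smul t) _⟩

/-- The dilation `f ↦ (z ↦ f (t z))` on continuous functions on the closed ball. -/
def dilateFn (d : ℕ) (t : ℂ) (ht : ‖t‖ ≤ 1) (f : C(CBall d, ℂ)) : C(CBall d, ℂ) :=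
  f.comp (dilatePt d t ht)

/-- A closed ideal of the ball algebra is homogeneous if it is invariant under all
dilations `z ↦ t z`, `|t| < 1`. -/
def IsHomogBallIdeal (d : ℕ) (J : Set C(CBall d, ℂ)) : Prop :=
  ∀ f ∈ J, ∀ t : ℂ, ∀ ht : ‖t‖ < 1, dilateFn d t ht.le f ∈ J

namespace Stmt12

open Complex MeasureTheory intervalIntegral ContinuousMap Finset

abbrev 𝔸 (d : ℕ) := C(CBall d, ℂ)

variable {d : ℕ}

/-- dilation as an algebra homomorphism -/
def dil (d : ℕ) (t : ℂ) (ht : ‖t‖ ≤ 1) : 𝔸 d →ₐ[ℂ] 𝔸 d :=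
  ContinuousMap.compRightAlgHom ℂ ℂ (dilatePt d t ht)

lemma dil_apply (t : ℂ) (ht : ‖t‖ ≤ 1) (f : 𝔸 d) :
    dil d t ht f = dilateFn d t ht f := rfl

lemma dil_apply' (t : ℂ) (ht : ‖t‖ ≤ 1) (f : 𝔸 d) (z : CBall d) :
    dil d t ht f z = f (dilatePt d t ht z) := rfl

lemma norm_dil_le (t : ℂ) (ht : ‖t‖ ≤ 1) (f : 𝔸 d) : ‖dil d t ht f‖ ≤ ‖f‖ := by
  refine ContinuousMap.norm_le _ (norm_nonneg f) |>.2 fun z => ?_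
  exact f.norm_coe_le_norm _

lemma dil_one (f : 𝔸 d) : dil d 1 (by norm_num) f = f := by
  refine ContinuousMap.ext fun z => ?_
  simp only [dil_apply', dilatePt]
  congr 1
  exact Subtype.ext (one_smul _ _)

/-- The ball algebra as a subalgebra. -/
def BA (d : ℕ) : Subalgebra ℂ (𝔸 d) := (polyMap d).range.topologicalClosure

lemma BA_coe : (BA d : Set (𝔸 d)) = ballAlg d := by
  simp only [BA, Subalgebra.topologicalClosure_coe, ballAlg, AlgHom.coe_range]

lemma mem_BA_iff {f : 𝔸 d} : f ∈ BA d ↔ f ∈ ballAlg d := by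
  rw [← BA_coe]; rfl

lemma ballAlg_closed : IsClosed (ballAlg d) := isClosed_closure

lemma polyMap_mem_ballAlg (p : MvPolynomial (Fin d) ℂ) : polyMap d p ∈ ballAlg d :=
  subset_closure ⟨p, rfl⟩


lemma smul_mem_cball {t : ℂ} (ht : ‖t‖ ≤ 1) {z : Cd d} (hz : z ∈ CBall d) :
    t • z ∈ CBall d := by
  have hz' : ‖z‖ ≤ 1 := mem_closedBall_zero_iff.mp hz
  rw [mem_closedBall_zero_iff, norm_smul]
  exact mul_le_one₀ ht (norm_nonneg _) hz'

/-- the "uncurried" dilation of `f` as a continuous map on the parameter and point -/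
def dilUnc (f : 𝔸 d) : C({t : ℂ // ‖t‖ ≤ 1} × CBall d, ℂ) :=
  ⟨fun p => f ⟨p.1.1 • (p.2 : Cd d), smul_mem_cball p.1.2 p.2.2⟩, by
    apply f.continuous.comp
    apply Continuous.subtype_mk
    exact (continuous_subtype_val.comp continuous_fst).smul
      (continuous_subtype_val.comp continuous_snd)⟩

lemma dil_eq_curry (f : 𝔸 d) (t : ℂ) (ht : ‖t‖ ≤ 1) :
    dil d t ht f = ContinuousMap.curry (dilUnc f) ⟨t, ht⟩ := by
  refine ContinuousMap.ext fun z => rfl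

lemma continuous_dil_param (f : 𝔸 d) :
    Continuous fun t : {t : ℂ // ‖t‖ ≤ 1} => dil d t.1 t.2 f := by
  have : (fun t : {t : ℂ // ‖t‖ ≤ 1} => dil d t.1 t.2 f)
      = fun t => ContinuousMap.curry (dilUnc f) t := by
    funext t; exact dil_eq_curry f t.1 t.2
  rw [this]
  exact (ContinuousMap.curry (dilUnc f)).continuous

/-- scaling of polynomial variables -/
def scaleP (d : ℕ) (t : ℂ) : MvPolynomial (Fin d) ℂ →ₐ[ℂ] MvPolynomial (Fin d) ℂ :=
  aeval (fun i => C t * X i)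

lemma scaleP_monomial (t : ℂ) (μ : Fin d →₀ ℕ) (c : ℂ) :
    scaleP d t (monomial μ c) = t ^ μ.degree • monomial μ c := by
  rw [scaleP, aeval_monomial]
  have h1 : (μ.prod fun i k => (C t * X i : MvPolynomial (Fin d) ℂ) ^ k)
      = (μ.prod fun i k => (C (t ^ k) : MvPolynomial (Fin d) ℂ))
        * μ.prod fun i k => (X i : MvPolynomial (Fin d) ℂ) ^ k := by
    rw [← Finsupp.prod_mul]
    exact Finsupp.prod_congr fun i _ => by rw [mul_pow, C_pow]
  rw [h1]
  have h2 : (μ.prod fun i k => (C (t ^ k) : MvPolynomial (Fin d) ℂ))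
      = C (t ^ μ.degree) := by
    rw [Finsupp.prod, ← map_prod, Finset.prod_pow_eq_pow_sum]
    rfl
  rw [h2, monomial_eq, smul_eq_C_mul, algebraMap_eq]
  ring

lemma scaleP_homog (t : ℂ) {q : MvPolynomial (Fin d) ℂ} {j : ℕ}
    (hq : q.IsHomogeneous j) : scaleP d t q = t ^ j • q := by
  conv_lhs => rw [q.as_sum]
  rw [map_sum]
  conv_rhs => rw [q.as_sum, Finset.smul_sum]
  refine Finset.sum_congr rfl fun μ hμ => ?_
  rw [scaleP_monomial]
  congr 2
  have := hq (mem_support_iff.mp hμ)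
  rw [Finsupp.degree_eq_weight_one]; exact this

lemma scaleP_eq_sum (t : ℂ) (p : MvPolynomial (Fin d) ℂ) :
    scaleP d t p = ∑ j ∈ Finset.range (p.totalDegree + 1),
      t ^ j • homogeneousComponent j p := by
  conv_lhs => rw [← p.sum_homogeneousComponent]
  rw [map_sum]
  exact Finset.sum_congr rfl fun j _ =>
    scaleP_homog t (homogeneousComponent_isHomogeneous j p)

lemma dil_polyMap (t : ℂ) (ht : ‖t‖ ≤ 1) (p : MvPolynomial (Fin d) ℂ) :
    dil d t ht (polyMap d p) = polyMap d (scaleP d t p) := by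
  have : (dil d t ht).comp (polyMap d) = (polyMap d).comp (scaleP d t) := by
    apply MvPolynomial.algHom_ext
    intro i
    simp only [AlgHom.comp_apply, polyMap, scaleP, aeval_X, map_mul, aeval_C]
    refine ContinuousMap.ext fun z => ?_
    simp only [dil_apply', dilatePt, coordFn, ContinuousMap.coe_mk, ContinuousMap.mul_apply]
    rfl
  exact congrFun (congrArg DFunLike.coe this) p

lemma dil_polyMap_sum (t : ℂ) (ht : ‖t‖ ≤ 1) (p : MvPolynomial (Fin d) ℂ) :
    dil d t ht (polyMap d p) = ∑ j ∈ Finset.range (p.totalDegree + 1),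
      t ^ j • polyMap d (homogeneousComponent j p) := by
  rw [dil_polyMap, scaleP_eq_sum, map_sum]
  exact Finset.sum_congr rfl fun j _ => by rw [_root_.map_smul]

lemma norm_circ {s : ℝ} (θ : ℝ) (h0 : 0 ≤ s) (h1 : s ≤ 1) :
    ‖(s : ℂ) * Complex.exp (θ * Complex.I)‖ ≤ 1 := by
  rw [norm_mul]
  rw [Complex.norm_exp_ofReal_mul_I,
    mul_one, Complex.norm_real, Real.norm_eq_abs, _root_.abs_of_nonneg h0]
  exact h1

/-- the integrand for the Fourier-coefficient ("homogeneous component") operator -/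
def integrand (s : ℝ) (h0 : 0 ≤ s) (h1 : s ≤ 1) (k : ℕ) (f : 𝔸 d) (θ : ℝ) : 𝔸 d :=
  Complex.exp (-(k * θ) * Complex.I) •
    dil d ((s : ℂ) * Complex.exp (θ * Complex.I)) (norm_circ θ h0 h1) f

lemma continuous_integrand (s : ℝ) (h0 : 0 ≤ s) (h1 : s ≤ 1) (k : ℕ) (f : 𝔸 d) :
    Continuous fun θ => integrand s h0 h1 k f θ := by
  apply Continuous.fun_smul
  · exact Complex.continuous_exp.comp (by continuity)
  · have hc : Continuous fun θ : ℝ =>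
        (⟨(s : ℂ) * Complex.exp (θ * Complex.I), norm_circ θ h0 h1⟩ :
          {t : ℂ // ‖t‖ ≤ 1}) := by
      apply Continuous.subtype_mk
      exact continuous_const.mul (Complex.continuous_exp.comp (by continuity))
    exact (continuous_dil_param f).comp hc

lemma integrable_integrand (s : ℝ) (h0 : 0 ≤ s) (h1 : s ≤ 1) (k : ℕ) (f : 𝔸 d) :
    IntervalIntegrable (integrand s h0 h1 k f) MeasureTheory.volume 0 (2 * Real.pi) :=
  (continuous_integrand s h0 h1 k f).intervalIntegrable _ _

/-- unnormalized component integral -/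
def homI (s : ℝ) (h0 : 0 ≤ s) (h1 : s ≤ 1) (k : ℕ) (f : 𝔸 d) : 𝔸 d :=
  ∫ θ in (0:ℝ)..(2*Real.pi), integrand s h0 h1 k f θ

/-- the normalized `k`-th homogeneous component operator at radius `s` -/
def homF (s : ℝ) (h0 : 0 ≤ s) (h1 : s ≤ 1) (k : ℕ) (f : 𝔸 d) : 𝔸 d :=
  ((s : ℂ))⁻¹ ^ k • ((2 * Real.pi)⁻¹ • homI s h0 h1 k f)

lemma circ_int (s : ℝ) (j k : ℕ) :
    (∫ θ in (0:ℝ)..(2*Real.pi),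
      Complex.exp (-(k * θ) * Complex.I) * ((s : ℂ) * Complex.exp (θ * Complex.I)) ^ j)
    = if j = k then ((2 * Real.pi : ℝ) : ℂ) * (s : ℂ) ^ k else 0 := by
  have key : ∀ θ : ℝ, Complex.exp (-(k * θ) * Complex.I)
      * ((s : ℂ) * Complex.exp (θ * Complex.I)) ^ j
      = (s : ℂ) ^ j * Complex.exp ((((j : ℂ) - k) * Complex.I) * θ) := by
    intro θ
    rw [mul_pow, ← Complex.exp_nat_mul, ← mul_assoc, mul_comm (Complex.exp _),
      mul_assoc, ← Complex.exp_add]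
    ring_nf
  simp only [key]
  rw [intervalIntegral.integral_const_mul]
  by_cases hjk : j = k
  · subst hjk
    simp only [sub_self, zero_mul, Complex.exp_zero]
    rw [intervalIntegral.integral_const]
    simp [Real.pi_pos.le, mul_comm]
  · have hc : (((j : ℂ) - k) * Complex.I) ≠ 0 := by
      apply mul_ne_zero _ Complex.I_ne_zero
      rw [sub_ne_zero]
      exact_mod_cast fun h => hjk (Nat.cast_injective h)
    rw [integral_exp_mul_complex hc]
    have h2 : (((j : ℂ) - k) * Complex.I) * ((2 * Real.pi : ℝ) : ℂ)
        = ((j : ℤ) - (k : ℤ) : ℤ) * (2 * (Real.pi : ℂ) * Complex.I) := by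
      push_cast; ring
    rw [h2, Complex.exp_int_mul_two_pi_mul_I]
    simp [hjk]

lemma homI_polyMap (s : ℝ) (h0 : 0 ≤ s) (h1 : s ≤ 1) (k : ℕ) (p : MvPolynomial (Fin d) ℂ) :
    homI s h0 h1 k (polyMap d p)
      = ∑ j ∈ Finset.range (p.totalDegree + 1),
          (if j = k then ((2 * Real.pi : ℝ) : ℂ) * (s : ℂ) ^ k else 0) •
            polyMap d (homogeneousComponent j p) := by
  have hint : ∀ θ : ℝ, integrand s h0 h1 k (polyMap d p) θ
      = ∑ j ∈ Finset.range (p.totalDegree + 1),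
          (Complex.exp (-(k * θ) * Complex.I)
            * ((s : ℂ) * Complex.exp (θ * Complex.I)) ^ j) •
            polyMap d (homogeneousComponent j p) := by
    intro θ
    rw [integrand, dil_polyMap_sum, Finset.smul_sum]
    exact Finset.sum_congr rfl fun j _ => by rw [smul_smul]
  rw [homI]
  rw [intervalIntegral.integral_congr (g := fun θ => ∑ j ∈ Finset.range (p.totalDegree + 1),
      (Complex.exp (-(k * θ) * Complex.I) * ((s : ℂ) * Complex.exp (θ * Complex.I)) ^ j) •
        polyMap d (homogeneousComponent j p)) (fun θ _ => hint θ)]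
  rw [intervalIntegral.integral_finset_sum]
  · refine Finset.sum_congr rfl fun j _ => ?_
    rw [intervalIntegral.integral_smul_const, circ_int]
  · intro j _
    apply Continuous.intervalIntegrable
    apply Continuous.fun_smul _ continuous_const
    exact (Complex.continuous_exp.comp (by continuity)).mul
      ((continuous_const.mul (Complex.continuous_exp.comp (by continuity))).pow j)

lemma homF_polyMap (s : ℝ) (h0 : 0 < s) (h1 : s ≤ 1) (k : ℕ) (p : MvPolynomial (Fin d) ℂ) :
    homF s h0.le h1 k (polyMap d p) = polyMap d (homogeneousComponent k p) := by
  rw [homF, homI_polyMap]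
  have : ∀ j ∈ Finset.range (p.totalDegree + 1),
      (if j = k then ((2 * Real.pi : ℝ) : ℂ) * (s : ℂ) ^ k else 0) •
        polyMap d (homogeneousComponent j p)
      = if j = k then (((2 * Real.pi : ℝ) : ℂ) * (s : ℂ) ^ k) •
          polyMap d (homogeneousComponent j p) else 0 := by
    intro j _; split <;> simp
  rw [Finset.sum_congr rfl this, Finset.sum_ite_eq' (Finset.range (p.totalDegree + 1)) k]
  by_cases hk : k ∈ Finset.range (p.totalDegree + 1)
  · rw [if_pos hk]
    rw [← IsScalarTower.algebraMap_smul ℂ ((2 * Real.pi)⁻¹ : ℝ), smul_smul, smul_smul]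
    have hπ : (Real.pi : ℂ) ≠ 0 := by exact_mod_cast Real.pi_ne_zero
    have hs : (s : ℂ) ≠ 0 := by exact_mod_cast h0.ne'
    have : (s : ℂ)⁻¹ ^ k * algebraMap ℝ ℂ (2 * Real.pi)⁻¹ * (((2 * Real.pi : ℝ) : ℂ) * (s : ℂ) ^ k) = 1 := by
      rw [Complex.coe_algebraMap]
      push_cast
      field_simp
      ring
      rw [← mul_pow, mul_inv_cancel₀ hs, one_pow]
    rw [this, one_smul]
  · rw [if_neg hk, smul_zero, smul_zero]
    have hk' : p.totalDegree < k := by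
      simpa [Nat.lt_succ_iff, Finset.mem_range, not_lt] using
        (by simpa [Finset.mem_range] using hk : ¬ k < p.totalDegree + 1)
    rw [homogeneousComponent_eq_zero (n := k) (φ := p) hk', map_zero]

lemma norm_integrand_le (s : ℝ) (h0 : 0 ≤ s) (h1 : s ≤ 1) (k : ℕ) (f : 𝔸 d) (θ : ℝ) :
    ‖integrand s h0 h1 k f θ‖ ≤ ‖f‖ := by
  rw [integrand, norm_smul]
  have : ‖Complex.exp (-(k * θ) * Complex.I)‖ = 1 := by
    rw [Complex.norm_exp]
    simp
  rw [this, one_mul]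
  exact norm_dil_le _ _ f

lemma norm_homI_le (s : ℝ) (h0 : 0 ≤ s) (h1 : s ≤ 1) (k : ℕ) (f : 𝔸 d) :
    ‖homI s h0 h1 k f‖ ≤ 2 * Real.pi * ‖f‖ := by
  have := intervalIntegral.norm_integral_le_of_norm_le_const
    (C := ‖f‖) (f := integrand s h0 h1 k f) (a := 0) (b := 2*Real.pi)
    (fun θ _ => norm_integrand_le s h0 h1 k f θ)
  calc ‖homI s h0 h1 k f‖ ≤ ‖f‖ * |2 * Real.pi - 0| := this
    _ = 2 * Real.pi * ‖f‖ := by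
        rw [sub_zero, _root_.abs_of_nonneg (by positivity)]; ring

lemma norm_homF_le (s : ℝ) (h0 : 0 < s) (h1 : s ≤ 1) (k : ℕ) (f : 𝔸 d) :
    ‖homF s h0.le h1 k f‖ ≤ (s⁻¹) ^ k * ‖f‖ := by
  rw [homF, norm_smul, norm_smul]
  have h2 : ‖(s : ℂ)⁻¹ ^ k‖ = (s⁻¹) ^ k := by
    rw [norm_pow, norm_inv, Complex.norm_real, Real.norm_eq_abs, _root_.abs_of_nonneg h0.le]
  have h3 : ‖(2 * Real.pi)⁻¹‖ = (2 * Real.pi)⁻¹ := by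
    rw [Real.norm_eq_abs, _root_.abs_of_nonneg (by positivity)]
  rw [h2, h3]
  have h4 := norm_homI_le s h0.le h1 k f
  have hπ : (0:ℝ) < 2 * Real.pi := by positivity
  calc (s⁻¹) ^ k * ((2 * Real.pi)⁻¹ * ‖homI s h0.le h1 k f‖)
      ≤ (s⁻¹) ^ k * ((2 * Real.pi)⁻¹ * (2 * Real.pi * ‖f‖)) := by
        apply mul_le_mul_of_nonneg_left _ (by positivity)
        exact mul_le_mul_of_nonneg_left h4 (by positivity)
    _ = (s⁻¹) ^ k * ‖f‖ := by field_simp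

lemma homF_add (s : ℝ) (h0 : 0 ≤ s) (h1 : s ≤ 1) (k : ℕ) (f g : 𝔸 d) :
    homF s h0 h1 k (f + g) = homF s h0 h1 k f + homF s h0 h1 k g := by
  have hint : ∀ θ, integrand s h0 h1 k (f + g) θ
      = integrand s h0 h1 k f θ + integrand s h0 h1 k g θ := by
    intro θ; rw [integrand, integrand, integrand, map_add, smul_add]
  have : homI s h0 h1 k (f + g) = homI s h0 h1 k f + homI s h0 h1 k g := by
    rw [homI, homI, homI, intervalIntegral.integral_congr (fun θ _ => hint θ),
      intervalIntegral.integral_add (integrable_integrand s h0 h1 k f)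
        (integrable_integrand s h0 h1 k g)]
  rw [homF, homF, homF, this, smul_add, smul_add]

lemma homF_smul (s : ℝ) (h0 : 0 ≤ s) (h1 : s ≤ 1) (k : ℕ) (c : ℂ) (f : 𝔸 d) :
    homF s h0 h1 k (c • f) = c • homF s h0 h1 k f := by
  have hint : ∀ θ, integrand s h0 h1 k (c • f) θ = c • integrand s h0 h1 k f θ := by
    intro θ; rw [integrand, integrand, _root_.map_smul, smul_comm]
  have : homI s h0 h1 k (c • f) = c • homI s h0 h1 k f := by
    rw [homI, homI, intervalIntegral.integral_congr (fun θ _ => hint θ),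
      intervalIntegral.integral_smul]
  rw [homF, homF, this, smul_comm c, smul_comm c]

/-- The component operator as a continuous linear map. -/
def homCLM (s : ℝ) (h0 : 0 < s) (h1 : s ≤ 1) (k : ℕ) : 𝔸 d →L[ℂ] 𝔸 d :=
  LinearMap.mkContinuous
    { toFun := homF s h0.le h1 k
      map_add' := homF_add s h0.le h1 k
      map_smul' := homF_smul s h0.le h1 k }
    ((s⁻¹) ^ k) (norm_homF_le s h0 h1 k)

lemma homCLM_apply (s : ℝ) (h0 : 0 < s) (h1 : s ≤ 1) (k : ℕ) (f : 𝔸 d) :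
    homCLM s h0 h1 k f = homF s h0.le h1 k f := rfl

/-- Two continuous functions agreeing on polynomials agree on the ball algebra. -/
lemma eq_on_ballAlg {X : Type*} [TopologicalSpace X] [T2Space X] {F G : 𝔸 d → X}
    (hF : Continuous F) (hG : Continuous G)
    (h : ∀ p, F (polyMap d p) = G (polyMap d p)) {f : 𝔸 d} (hf : f ∈ ballAlg d) :
    F f = G f := by
  have hsub : Set.range (polyMap d) ⊆ {f | F f = G f} := by
    rintro _ ⟨p, rfl⟩; exact h p
  exact closure_minimal hsub (isClosed_eq hF hG) hf

/-- a set version: if `S` is closed and contains all polynomial images under a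
continuous map, then it contains the whole image of the ball algebra -/
lemma mem_of_ballAlg {X : Type*} [TopologicalSpace X] {F : 𝔸 d → X} (hF : Continuous F)
    {S : Set X} (hS : IsClosed S) (h : ∀ p, F (polyMap d p) ∈ S) {f : 𝔸 d}
    (hf : f ∈ ballAlg d) : F f ∈ S := by
  have hsub : Set.range (polyMap d) ⊆ F ⁻¹' S := by rintro _ ⟨p, rfl⟩; exact h p
  exact closure_minimal hsub (hS.preimage hF) hf

lemma homCLM_eq_on_ballAlg (s s' : ℝ) (h0 : 0 < s) (h1 : s ≤ 1) (h0' : 0 < s')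
    (h1' : s' ≤ 1) (k : ℕ) {f : 𝔸 d} (hf : f ∈ ballAlg d) :
    homCLM s h0 h1 k f = homCLM s' h0' h1' k f :=
  eq_on_ballAlg (homCLM s h0 h1 k).continuous (homCLM s' h0' h1' k).continuous
    (fun p => by rw [homCLM_apply, homCLM_apply, homF_polyMap s h0 h1, homF_polyMap s' h0' h1']) hf

/-- the canonical homogeneous-component operator (radius 1/2) -/
def Φ (d : ℕ) (k : ℕ) : 𝔸 d →L[ℂ] 𝔸 d := homCLM (1/2) (by norm_num) (by norm_num) k

lemma Φ_polyMap (k : ℕ) (p : MvPolynomial (Fin d) ℂ) :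
    Φ d k (polyMap d p) = polyMap d (homogeneousComponent k p) := by
  rw [Φ, homCLM_apply, homF_polyMap (1/2) (by norm_num) (by norm_num)]

lemma norm_Φ_le (k : ℕ) {f : 𝔸 d} (hf : f ∈ ballAlg d) {s : ℝ} (h0 : 0 < s)
    (h1 : s ≤ 1) : ‖Φ d k f‖ ≤ (s⁻¹) ^ k * ‖f‖ := by
  rw [Φ, homCLM_eq_on_ballAlg (1/2) s (by norm_num) (by norm_num) h0 h1 k hf,
    homCLM_apply]
  exact norm_homF_le s h0 h1 k f

instance homogFD (k : ℕ) :
    FiniteDimensional ℂ (homogeneousSubmodule (Fin d) ℂ k) :=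
  Submodule.finiteDimensional_of_le (S₂ := restrictTotalDegree (Fin d) ℂ k)
    (fun p hp => (mem_restrictTotalDegree _ _ _).2
      ((mem_homogeneousSubmodule _ _).1 hp).totalDegree_le)

/-- image of the homogeneous polynomials of degree `k` in the continuous functions -/
def Vk (d k : ℕ) : Submodule ℂ (𝔸 d) :=
  (homogeneousSubmodule (Fin d) ℂ k).map (polyMap d).toLinearMap

instance VkFD (k : ℕ) : FiniteDimensional ℂ (Vk d k) := Module.Finite.map _ _

lemma Vk_closed (k : ℕ) : IsClosed (Vk d k : Set (𝔸 d)) :=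
  Submodule.closed_of_finiteDimensional _

lemma Φ_mem_Vk (k : ℕ) {f : 𝔸 d} (hf : f ∈ ballAlg d) : Φ d k f ∈ Vk d k := by
  refine mem_of_ballAlg (Φ d k).continuous (Vk_closed k) (fun p => ?_) hf
  rw [Φ_polyMap]
  exact ⟨homogeneousComponent k p, homogeneousComponent_mem k p, rfl⟩

variable {J : Set (𝔸 d)}

lemma J_smul (hJ : IsIdealOfBallAlg d J) {f : 𝔸 d} (hf : f ∈ J) (c : ℂ) :
    c • f ∈ J := by
  have h1 : algebraMap ℂ (𝔸 d) c ∈ ballAlg d := by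
    rw [← (polyMap d).commutes c]
    exact polyMap_mem_ballAlg _
  rw [Algebra.smul_def]
  exact hJ.2.2.2 f hf _ h1

lemma J_rsmul (hJ : IsIdealOfBallAlg d J) {f : 𝔸 d} (hf : f ∈ J) (a : ℝ) :
    a • f ∈ J := by
  have : a • f = ((a : ℂ)) • f := by
    rw [← IsScalarTower.algebraMap_smul ℂ a f, Complex.coe_algebraMap]
  rw [this]; exact J_smul hJ hf _

lemma J_convex (hJ : IsIdealOfBallAlg d J) : Convex ℝ J := by
  intro x hx y hy a b _ _ _
  exact hJ.2.2.1 _ (J_rsmul hJ hx a) _ (J_rsmul hJ hy b)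

lemma J_sum (hJ : IsIdealOfBallAlg d J) {ι : Type*} (s : Finset ι) (F : ι → 𝔸 d)
    (h : ∀ i ∈ s, F i ∈ J) : ∑ i ∈ s, F i ∈ J := by
  classical
  induction s using Finset.induction_on with
  | empty => simpa using hJ.2.1
  | insert _ _ hnot ih =>
    rw [Finset.sum_insert hnot]
    exact hJ.2.2.1 _ (h _ (Finset.mem_insert_self _ _)) _
      (ih fun i hi => h i (Finset.mem_insert_of_mem hi))

lemma J_hasSum (hJ : IsIdealOfBallAlg d J) (hJcl : IsClosed J) {F : ℕ → 𝔸 d}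
    (hF : ∀ k, F k ∈ J) {x : 𝔸 d} (hx : HasSum F x) : x ∈ J :=
  hJcl.mem_of_tendsto hx (Filter.Eventually.of_forall fun s =>
    J_sum hJ s F fun i _ => hF i)

lemma integrand_mem_J (hJ : IsIdealOfBallAlg d J) (hJhom : IsHomogBallIdeal d J)
    (k : ℕ) {f : 𝔸 d} (hf : f ∈ J) (θ : ℝ) :
    integrand (1/2) (by norm_num) (by norm_num) k f θ ∈ J := by
  have hlt : ‖((1/2 : ℝ) : ℂ) * Complex.exp (θ * Complex.I)‖ < 1 := by
    rw [norm_mul,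
      Complex.norm_exp_ofReal_mul_I, mul_one, Complex.norm_real, Real.norm_eq_abs,
      _root_.abs_of_nonneg (by norm_num : (0:ℝ) ≤ 1/2)]
    norm_num
  have hd : dil d (((1/2 : ℝ) : ℂ) * Complex.exp (θ * Complex.I))
      (norm_circ θ (by norm_num) (by norm_num)) f ∈ J := hJhom f hf _ hlt
  exact J_smul hJ hd _

lemma avg_homI_mem_J (hJ : IsIdealOfBallAlg d J) (hJcl : IsClosed J)
    (hJhom : IsHomogBallIdeal d J) (k : ℕ) {f : 𝔸 d} (hf : f ∈ J) :
    (2 * Real.pi)⁻¹ • homI (1/2) (by norm_num) (by norm_num) k f ∈ J := by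
  have hle : (0:ℝ) ≤ 2 * Real.pi := by positivity
  have hvol : MeasureTheory.volume (Set.Ioc (0:ℝ) (2*Real.pi))
      = ENNReal.ofReal (2*Real.pi) := by simp [Real.volume_Ioc]
  have h0 : MeasureTheory.volume (Set.Ioc (0:ℝ) (2*Real.pi)) ≠ 0 := by
    rw [hvol]; simp [Real.pi_pos, ENNReal.ofReal_eq_zero]
  have hne : MeasureTheory.volume (Set.Ioc (0:ℝ) (2*Real.pi)) ≠ ⊤ := by
    rw [hvol]; exact ENNReal.ofReal_ne_top
  have hint : MeasureTheory.IntegrableOn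
      (integrand (1/2) (by norm_num) (by norm_num) k f)
      (Set.Ioc (0:ℝ) (2*Real.pi)) MeasureTheory.volume :=
    (continuous_integrand _ _ _ k f).integrableOn_Ioc
  have hmem : ∀ᵐ θ ∂(MeasureTheory.volume.restrict (Set.Ioc (0:ℝ) (2*Real.pi))),
      integrand (1/2) (by norm_num) (by norm_num) k f θ ∈ J :=
    Filter.Eventually.of_forall fun θ => integrand_mem_J hJ hJhom k hf θ
  have havg := (J_convex hJ).set_average_mem hJcl h0 hne hmem hint
  rw [MeasureTheory.setAverage_eq, MeasureTheory.measureReal_def, hvol, ENNReal.toReal_ofReal hle] at havg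
  have : homI (1/2) (by norm_num : (0:ℝ) ≤ 1/2) (by norm_num : (1/2:ℝ) ≤ 1) k f
      = ∫ θ in Set.Ioc (0:ℝ) (2*Real.pi),
          integrand (1/2) (by norm_num) (by norm_num) k f θ ∂MeasureTheory.volume := by
    rw [homI, intervalIntegral.integral_of_le hle]
  rw [this]
  exact havg

lemma Φ_mem_J (hJ : IsIdealOfBallAlg d J) (hJcl : IsClosed J)
    (hJhom : IsHomogBallIdeal d J) (k : ℕ) {f : 𝔸 d} (hf : f ∈ J) :
    Φ d k f ∈ J := by
  rw [Φ, homCLM_apply, homF]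
  exact J_smul hJ (avg_homI_mem_J hJ hJcl hJhom k hf) _

lemma ballAlg_mul_mem {f g : 𝔸 d} (hf : f ∈ ballAlg d) (hg : g ∈ ballAlg d) :
    f * g ∈ ballAlg d := by
  rw [← mem_BA_iff] at *
  exact mul_mem hf hg

lemma ballAlg_add_mem {f g : 𝔸 d} (hf : f ∈ ballAlg d) (hg : g ∈ ballAlg d) :
    f + g ∈ ballAlg d := by
  rw [← mem_BA_iff] at *
  exact add_mem hf hg

lemma ballAlg_pow_mem {f : 𝔸 d} (hf : f ∈ ballAlg d) (m : ℕ) :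
    f ^ m ∈ ballAlg d := by
  rw [← mem_BA_iff] at *
  exact pow_mem hf m

lemma ballAlg_neg_mem {f : 𝔸 d} (hf : f ∈ ballAlg d) : -f ∈ ballAlg d := by
  rw [← mem_BA_iff] at *
  exact neg_mem hf

lemma ballAlg_sub_mem {f g : 𝔸 d} (hf : f ∈ ballAlg d) (hg : g ∈ ballAlg d) :
    f - g ∈ ballAlg d := by
  rw [← mem_BA_iff] at *
  exact sub_mem hf hg

lemma homogComp_mul (k : ℕ) (p q : MvPolynomial (Fin d) ℂ) :
    homogeneousComponent k (p * q)
      = ∑ x ∈ Finset.HasAntidiagonal.antidiagonal k,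
          homogeneousComponent x.1 p * homogeneousComponent x.2 q := by
  classical
  have key : homogeneousComponent k (p * q)
      = ∑ i ∈ Finset.range (p.totalDegree + 1), ∑ j ∈ Finset.range (q.totalDegree + 1),
          (if k = i + j then homogeneousComponent i p * homogeneousComponent j q else 0) := by
    conv_lhs => rw [← p.sum_homogeneousComponent, ← q.sum_homogeneousComponent]
    rw [Finset.sum_mul_sum, map_sum]
    refine Finset.sum_congr rfl fun i _ => ?_
    rw [map_sum]
    refine Finset.sum_congr rfl fun j _ => ?_
    exact homogeneousComponent_of_mem
      (((homogeneousComponent_isHomogeneous i p).mul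
        (homogeneousComponent_isHomogeneous j q)))
  rw [key, ← Finset.sum_product']
  rw [← Finset.sum_filter]
  refine Finset.sum_subset ?_ ?_
  · intro x hx
    rw [Finset.mem_filter] at hx
    rw [Finset.HasAntidiagonal.mem_antidiagonal]
    exact hx.2.symm
  · intro x hx hnx
    rw [Finset.HasAntidiagonal.mem_antidiagonal] at hx
    rw [Finset.mem_filter, Finset.mem_product, Finset.mem_range, Finset.mem_range] at hnx
    push_neg at hnx
    rcases Nat.lt_or_ge p.totalDegree x.1 with h1 | h1
    · rw [homogeneousComponent_eq_zero (n := x.1) (φ := p) h1, zero_mul]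
    · rcases Nat.lt_or_ge q.totalDegree x.2 with h2 | h2
      · rw [homogeneousComponent_eq_zero (n := x.2) (φ := q) h2, mul_zero]
      · exact (hnx ⟨by omega, by omega⟩ hx.symm).elim

lemma Φ_mul (k : ℕ) {f g : 𝔸 d} (hf : f ∈ ballAlg d) (hg : g ∈ ballAlg d) :
    Φ d k (f * g) = ∑ x ∈ Finset.HasAntidiagonal.antidiagonal k, Φ d x.1 f * Φ d x.2 g := by
  have stage1 : ∀ p : MvPolynomial (Fin d) ℂ, ∀ g' ∈ ballAlg d,
      Φ d k (polyMap d p * g') = ∑ x ∈ Finset.HasAntidiagonal.antidiagonal k,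
        Φ d x.1 (polyMap d p) * Φ d x.2 g' := by
    intro p g' hg'
    refine eq_on_ballAlg (F := fun g' => Φ d k (polyMap d p * g'))
      (G := fun g' => ∑ x ∈ Finset.HasAntidiagonal.antidiagonal k, Φ d x.1 (polyMap d p) * Φ d x.2 g')
      ((Φ d k).continuous.comp (continuous_mul_left _))
      (continuous_finset_sum _ fun x _ =>
        (continuous_mul_left _).comp (Φ d x.2).continuous) (fun q => ?_) hg'
    show Φ d k (polyMap d p * polyMap d q)
      = ∑ x ∈ Finset.HasAntidiagonal.antidiagonal k, Φ d x.1 (polyMap d p) * Φ d x.2 (polyMap d q)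
    rw [← map_mul, Φ_polyMap, homogComp_mul, map_sum]
    exact Finset.sum_congr rfl fun x _ => by rw [map_mul, Φ_polyMap, Φ_polyMap]
  refine eq_on_ballAlg (F := fun f => Φ d k (f * g))
    (G := fun f => ∑ x ∈ Finset.HasAntidiagonal.antidiagonal k, Φ d x.1 f * Φ d x.2 g)
    ((Φ d k).continuous.comp (continuous_mul_right _))
    (continuous_finset_sum _ fun x _ =>
      (continuous_mul_right _).comp (Φ d x.1).continuous)
    (fun p => stage1 p g hg) hf

lemma norm_term_le {f : 𝔸 d} (hf : f ∈ ballAlg d) {r : ℝ} (h0 : 0 ≤ r) (h1 : r < 1)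
    (j : ℕ) : ‖((r:ℂ))^j • Φ d j f‖ ≤ (r / ((1+r)/2))^j * ‖f‖ := by
  set s : ℝ := (1+r)/2 with hs
  have hs0 : 0 < s := by rw [hs]; linarith
  have hs1 : s ≤ 1 := by rw [hs]; linarith
  have hΦ := norm_Φ_le j hf hs0 hs1
  rw [norm_smul, norm_pow, Complex.norm_real, Real.norm_eq_abs, _root_.abs_of_nonneg h0]
  calc r ^ j * ‖Φ d j f‖ ≤ r ^ j * ((s⁻¹)^j * ‖f‖) := by
        apply mul_le_mul_of_nonneg_left hΦ (by positivity)
    _ = (r / s)^j * ‖f‖ := by rw [div_eq_mul_inv, mul_pow]; ring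

lemma ratio_lt_one {r : ℝ} (h0 : 0 ≤ r) (h1 : r < 1) : r / ((1+r)/2) < 1 := by
  rw [div_lt_one (by linarith)]
  linarith

lemma summable_term {f : 𝔸 d} (hf : f ∈ ballAlg d) {r : ℝ} (h0 : 0 ≤ r) (h1 : r < 1) :
    Summable (fun j => ((r:ℂ))^j • Φ d j f) := by
  apply Summable.of_norm_bounded (Summable.mul_right ‖f‖
    (summable_geometric_of_lt_one (by positivity) (ratio_lt_one h0 h1)))
  exact norm_term_le hf h0 h1

lemma abel_poly {r : ℝ} (h0 : 0 ≤ r) (h1 : r ≤ 1) (p : MvPolynomial (Fin d) ℂ) :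
    dil d ((r:ℝ):ℂ) (by rwa [Complex.norm_real, Real.norm_eq_abs, _root_.abs_of_nonneg h0])
        (polyMap d p)
      = ∑' j, ((r:ℂ))^j • Φ d j (polyMap d p) := by
  rw [dil_polyMap_sum]
  rw [tsum_eq_sum (s := Finset.range (p.totalDegree + 1)) ?_]
  · exact Finset.sum_congr rfl fun j _ => by rw [Φ_polyMap]
  · intro j hj
    rw [Finset.mem_range, not_lt] at hj
    rw [Φ_polyMap, homogeneousComponent_eq_zero (n := j) (φ := p) (by omega), map_zero,
      smul_zero]

lemma abel (f : 𝔸 d) (hf : f ∈ ballAlg d) {r : ℝ} (h0 : 0 ≤ r) (h1 : r < 1) :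
    dil d ((r:ℝ):ℂ)
        (by rw [Complex.norm_real, Real.norm_eq_abs, _root_.abs_of_nonneg h0]; exact h1.le)
        f
      = ∑' j, ((r:ℂ))^j • Φ d j f := by
  set hr : ‖((r:ℝ):ℂ)‖ ≤ 1 :=
    (by rw [Complex.norm_real, Real.norm_eq_abs, _root_.abs_of_nonneg h0]; exact h1.le)
  set s : ℝ := (1+r)/2 with hs
  have hq0 : (0:ℝ) ≤ r / s := by positivity
  have hq1 : r / s < 1 := ratio_lt_one h0 h1
  have key : ∀ ε > 0, ‖dil d ((r:ℝ):ℂ) hr f - ∑' j, ((r:ℂ))^j • Φ d j f‖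
      ≤ (1 + (1 - r/s)⁻¹) * ε := by
    intro ε hε
    obtain ⟨g, hgmem, hgd⟩ := Metric.mem_closure_iff.1 hf ε hε
    obtain ⟨p, rfl⟩ := hgmem
    have hfp : f - polyMap d p ∈ ballAlg d :=
      ballAlg_sub_mem hf (polyMap_mem_ballAlg p)
    have hd : ‖f - polyMap d p‖ ≤ ε := by
      rw [← dist_eq_norm] at *
      exact hgd.le
    have e1 : dil d ((r:ℝ):ℂ) hr f - dil d ((r:ℝ):ℂ) hr (polyMap d p)
        = dil d ((r:ℝ):ℂ) hr (f - polyMap d p) := (map_sub _ _ _).symm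
    have e2 : (∑' j, ((r:ℂ))^j • Φ d j f) - ∑' j, ((r:ℂ))^j • Φ d j (polyMap d p)
        = ∑' j, ((r:ℂ))^j • Φ d j (f - polyMap d p) := by
      rw [← Summable.tsum_sub (summable_term hf h0 h1)
        (summable_term (polyMap_mem_ballAlg p) h0 h1)]
      refine tsum_congr fun j => ?_
      rw [map_sub, smul_sub]
    have e3 : ‖∑' j, ((r:ℂ))^j • Φ d j (f - polyMap d p)‖
        ≤ (1 - r/s)⁻¹ * ε := by
      have hsumn : Summable (fun j => ‖((r:ℂ))^j • Φ d j (f - polyMap d p)‖) :=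
        Summable.of_nonneg_of_le (fun j => norm_nonneg _) (norm_term_le hfp h0 h1)
          (Summable.mul_right _ (summable_geometric_of_lt_one hq0 hq1))
      calc ‖∑' j, ((r:ℂ))^j • Φ d j (f - polyMap d p)‖
          ≤ ∑' j, ‖((r:ℂ))^j • Φ d j (f - polyMap d p)‖ :=
            norm_tsum_le_tsum_norm hsumn
        _ ≤ ∑' j, (r/s)^j * ‖f - polyMap d p‖ := by
            apply Summable.tsum_le_tsum (norm_term_le hfp h0 h1) hsumn
            exact Summable.mul_right _ (summable_geometric_of_lt_one hq0 hq1)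
        _ = (1 - r/s)⁻¹ * ‖f - polyMap d p‖ := by
            rw [tsum_mul_right, tsum_geometric_of_lt_one hq0 hq1]
        _ ≤ (1 - r/s)⁻¹ * ε := by
            apply mul_le_mul_of_nonneg_left hd
            have := sub_pos.2 hq1
            positivity
    calc ‖dil d ((r:ℝ):ℂ) hr f - ∑' j, ((r:ℂ))^j • Φ d j f‖
        = ‖(dil d ((r:ℝ):ℂ) hr f - dil d ((r:ℝ):ℂ) hr (polyMap d p))
            + (dil d ((r:ℝ):ℂ) hr (polyMap d p) - ∑' j, ((r:ℂ))^j • Φ d j (polyMap d p))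
            + ((∑' j, ((r:ℂ))^j • Φ d j (polyMap d p)) - ∑' j, ((r:ℂ))^j • Φ d j f)‖ := by
          congr 1; abel
      _ ≤ ‖dil d ((r:ℝ):ℂ) hr f - dil d ((r:ℝ):ℂ) hr (polyMap d p)‖
          + ‖dil d ((r:ℝ):ℂ) hr (polyMap d p) - ∑' j, ((r:ℂ))^j • Φ d j (polyMap d p)‖
          + ‖(∑' j, ((r:ℂ))^j • Φ d j (polyMap d p)) - ∑' j, ((r:ℂ))^j • Φ d j f‖ :=
          norm_add₃_le
      _ ≤ ε + 0 + (1 - r/s)⁻¹ * ε := by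
          gcongr
          · rw [e1]
            exact (norm_dil_le _ _ _).trans hd
          · rw [abel_poly h0 h1.le, sub_self, norm_zero]
          · rw [← norm_neg, neg_sub, e2]
            exact e3
      _ = (1 + (1 - r/s)⁻¹) * ε := by ring
  by_contra hne
  have hpos : 0 < ‖dil d ((r:ℝ):ℂ) hr f - ∑' j, ((r:ℂ))^j • Φ d j f‖ := by
    rw [norm_pos_iff, sub_ne_zero]
    exact hne
  set C := 1 + (1 - r/s)⁻¹ with hC
  have hCpos : 0 < C := by
    have := sub_pos.2 hq1
    rw [hC]; positivity
  have := key (‖dil d ((r:ℝ):ℂ) hr f - ∑' j, ((r:ℂ))^j • Φ d j f‖ / (2*C))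
    (by positivity)
  have heq : C * (‖dil d ((r:ℝ):ℂ) hr f - ∑' j, ((r:ℂ))^j • Φ d j f‖ / (2*C))
      = ‖dil d ((r:ℝ):ℂ) hr f - ∑' j, ((r:ℂ))^j • Φ d j f‖ / 2 := by
    field_simp
  rw [heq] at this
  linarith [this, hpos, hCpos]

lemma real_norm_le_one {r : ℝ} (h0 : 0 ≤ r) (h1 : r ≤ 1) : ‖((r:ℝ):ℂ)‖ ≤ 1 := by
  rwa [Complex.norm_real, Real.norm_eq_abs, _root_.abs_of_nonneg h0]

lemma mem_J_of_components (hJ : IsIdealOfBallAlg d J) (hJcl : IsClosed J)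
    {f : 𝔸 d} (hf : f ∈ ballAlg d) (h : ∀ k, Φ d k f ∈ J) : f ∈ J := by
  have hdil : ∀ r : ℝ, ∀ h0 : 0 ≤ r, ∀ h1 : r < 1,
      dil d ((r:ℝ):ℂ) (real_norm_le_one h0 h1.le) f ∈ J := by
    intro r h0 h1
    have hsum := (summable_term hf h0 h1).hasSum
    have hmem : ∀ j, ((r:ℂ))^j • Φ d j f ∈ J := fun j => J_smul hJ (h j) _
    have htsum : (∑' j, ((r:ℂ))^j • Φ d j f) ∈ J := J_hasSum hJ hJcl hmem hsum
    have heq : dil d ((r:ℝ):ℂ) (real_norm_le_one h0 h1.le) f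
        = ∑' j, ((r:ℂ))^j • Φ d j f := abel f hf h0 h1
    rwa [heq]
  -- now take the limit r → 1
  have h0n : ∀ n : ℕ, (0:ℝ) ≤ 1 - 1/(n+1) := by
    intro n
    have : (1:ℝ)/(n+1) ≤ 1 := by
      rw [div_le_one (by positivity)]
      simp
    linarith
  have h1n : ∀ n : ℕ, (1 - 1/(n+1) : ℝ) < 1 := by
    intro n
    have : (0:ℝ) < 1/(n+1) := by positivity
    linarith
  have hseq : Filter.Tendsto (fun n : ℕ => (1 - 1/(n+1) : ℝ)) Filter.atTop (nhds 1) := by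
    have h2 := tendsto_one_div_add_atTop_nhds_zero_nat (𝕜 := ℝ)
    have h3 := Filter.Tendsto.sub (tendsto_const_nhds (x := (1:ℝ))
      (f := Filter.atTop)) h2
    simpa using h3
  have hT : Filter.Tendsto
      (fun n : ℕ => (⟨(((1 - 1/(n+1) : ℝ)):ℂ), real_norm_le_one (h0n n) (h1n n).le⟩ :
        {t : ℂ // ‖t‖ ≤ 1})) Filter.atTop (nhds ⟨1, by norm_num⟩) := by
    rw [tendsto_subtype_rng]
    have h5 := (Complex.continuous_ofReal.tendsto 1).comp hseq
    have h4 : Filter.Tendsto (fun n : ℕ => (((1 - 1/(n+1) : ℝ)) : ℂ)) Filter.atTop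
        (nhds ((1:ℝ):ℂ)) := h5
    simpa using h4
  have hlim := ((continuous_dil_param f).tendsto _).comp hT
  rw [dil_one] at hlim
  exact hJcl.mem_of_tendsto hlim (Filter.Eventually.of_forall fun n =>
    hdil _ (h0n n) (h1n n))

lemma ballAlg_const_mem (c : ℂ) : algebraMap ℂ (𝔸 d) c ∈ ballAlg d := by
  rw [← (polyMap d).commutes c]
  exact polyMap_mem_ballAlg _

lemma ballAlg_natCast_mem (c : ℕ) : ((c : 𝔸 d)) ∈ ballAlg d := by
  have : ((c : 𝔸 d)) = algebraMap ℂ (𝔸 d) (c : ℂ) := by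
    rw [map_natCast]
  rw [this]; exact ballAlg_const_mem _

lemma J_neg (hJ : IsIdealOfBallAlg d J) {f : 𝔸 d} (hf : f ∈ J) : -f ∈ J := by
  have := J_smul hJ hf (-1)
  simpa using this

lemma J_mul_left (hJ : IsIdealOfBallAlg d J) {f g : 𝔸 d} (hf : f ∈ J)
    (hg : g ∈ ballAlg d) : g * f ∈ J := hJ.2.2.2 f hf g hg

/-- the radical set is closed under addition (with explicit exponents) -/
lemma radJ_add (hJ : IsIdealOfBallAlg d J) {a b : 𝔸 d} (ha : a ∈ ballAlg d)
    (hb : b ∈ ballAlg d) {n m : ℕ} (hn : 1 ≤ n) (hm : 1 ≤ m)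
    (hna : a ^ n ∈ J) (hmb : b ^ m ∈ J) : (a + b) ^ (n + m) ∈ J := by
  rw [add_pow]
  apply J_sum hJ
  intro i hi
  rw [Finset.mem_range] at hi
  by_cases hc : n ≤ i
  · have he : a ^ i * b ^ (n + m - i) * ((n+m).choose i : 𝔸 d)
        = (a ^ (i - n) * b ^ (n + m - i) * ((n+m).choose i : 𝔸 d)) * a ^ n := by
      have : a ^ i = a ^ (i - n) * a ^ n := by
        rw [← pow_add]; congr 1; omega
      rw [this]; ring
    rw [he]
    exact J_mul_left hJ hna
      (ballAlg_mul_mem (ballAlg_mul_mem (ballAlg_pow_mem ha _) (ballAlg_pow_mem hb _))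
        (ballAlg_natCast_mem _))
  · have he : a ^ i * b ^ (n + m - i) * ((n+m).choose i : 𝔸 d)
        = (a ^ i * b ^ (n + m - i - m) * ((n+m).choose i : 𝔸 d)) * b ^ m := by
      have : b ^ (n + m - i) = b ^ (n + m - i - m) * b ^ m := by
        rw [← pow_add]; congr 1; omega
      rw [this]; ring
    rw [he]
    exact J_mul_left hJ hmb
      (ballAlg_mul_mem (ballAlg_mul_mem (ballAlg_pow_mem ha _) (ballAlg_pow_mem hb _))
        (ballAlg_natCast_mem _))

/-- the ideal of polynomials whose restriction lies in `J` -/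
def Ipoly (J : Set (𝔸 d)) (hJ : IsIdealOfBallAlg d J) : Ideal (MvPolynomial (Fin d) ℂ) where
  carrier := {p | polyMap d p ∈ J}
  add_mem' := fun ha hb => by
    simpa [Set.mem_setOf_eq, map_add] using hJ.2.2.1 _ ha _ hb
  zero_mem' := by
    simpa [Set.mem_setOf_eq, map_zero] using hJ.2.1
  smul_mem' := fun q p hp => by
    simp only [Set.mem_setOf_eq, smul_eq_mul, map_mul]
    exact hJ.2.2.2 _ hp _ (polyMap_mem_ballAlg q)

lemma mem_Ipoly {hJ : IsIdealOfBallAlg d J} {p : MvPolynomial (Fin d) ℂ} :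
    p ∈ Ipoly J hJ ↔ polyMap d p ∈ J := Iff.rfl

lemma exists_N (I : Ideal (MvPolynomial (Fin d) ℂ)) :
    ∃ N : ℕ, 1 ≤ N ∧ I.radical ^ N ≤ I := by
  obtain ⟨n, hn⟩ := Ideal.exists_radical_pow_le_of_fg I (IsNoetherian.noetherian _)
  exact ⟨max n 1, le_max_right _ _,
    le_trans (Ideal.pow_le_pow_right (le_max_left n 1)) hn⟩

/-- lowest-degree-component behaviour of powers -/
lemma pow_lowest {f : 𝔸 d} (hf : f ∈ ballAlg d) (k : ℕ)
    (hvan : ∀ j < k, Φ d j f = 0) :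
    ∀ m : ℕ, 1 ≤ m → (∀ t < k*m, Φ d t (f^m) = 0) ∧ Φ d (k*m) (f^m) = (Φ d k f)^m := by
  intro m
  induction m with
  | zero => omega
  | succ m IH =>
    intro _
    by_cases hm : m = 0
    · subst hm
      simp only [zero_add, pow_one, mul_one]
      exact ⟨fun t ht => hvan t ht, trivial⟩
    have hm1 : 1 ≤ m := by omega
    obtain ⟨IH1, IH2⟩ := IH hm1
    have hfm : f ^ m ∈ ballAlg d := ballAlg_pow_mem hf m
    have hmul : ∀ t, Φ d t (f^(m+1)) = ∑ x ∈ Finset.HasAntidiagonal.antidiagonal t,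
        Φ d x.1 f * Φ d x.2 (f^m) := by
      intro t
      rw [pow_succ, mul_comm (f^m) f]
      exact Φ_mul t hf hfm
    constructor
    · intro t ht
      rw [hmul t]
      apply Finset.sum_eq_zero
      intro x hx
      rw [Finset.HasAntidiagonal.mem_antidiagonal] at hx
      by_cases h1 : x.1 < k
      · rw [hvan _ h1, zero_mul]
      · have h2 : x.2 < k*m := by
          push_neg at h1
          have : k * (m+1) = k + k*m := by ring
          omega
        rw [IH1 _ h2, mul_zero]
    · rw [hmul]
      rw [Finset.sum_eq_single_of_mem (k, k*m) (by
        rw [Finset.HasAntidiagonal.mem_antidiagonal]; ring)]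
      · rw [IH2, ← pow_succ']
      · intro x hx hne
        rw [Finset.HasAntidiagonal.mem_antidiagonal] at hx
        by_cases h1 : x.1 < k
        · rw [hvan _ h1, zero_mul]
        · by_cases h2 : x.2 < k*m
          · rw [IH1 _ h2, mul_zero]
          · exfalso
            apply hne
            push_neg at h1 h2
            have hsplit : k * (m+1) = k + k*m := by ring
            have hx1 : x.1 = k := by omega
            have hx2 : x.2 = k*m := by omega
            exact Prod.ext hx1 hx2

/-- every homogeneous component of an element of the radical of `J` is (the restriction
of) a homogeneous polynomial lying in the radical of `Ipoly J`. -/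
lemma comp_radical (hJ : IsIdealOfBallAlg d J) (hJcl : IsClosed J)
    (hJhom : IsHomogBallIdeal d J) :
    ∀ k : ℕ, ∀ f : 𝔸 d, f ∈ ballAlg d → (∃ n, 1 ≤ n ∧ f ^ n ∈ J) →
      ∃ q : MvPolynomial (Fin d) ℂ, q ∈ (Ipoly J hJ).radical ∧
        q ∈ homogeneousSubmodule (Fin d) ℂ k ∧ polyMap d q = Φ d k f := by
  intro k
  induction k using Nat.strong_induction_on with
  | _ k IH =>
    rintro f hfB ⟨n, hn1, hnJ⟩
    have hIH : ∀ j : ℕ, ∃ q : MvPolynomial (Fin d) ℂ, j < k →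
        (q ∈ (Ipoly J hJ).radical ∧ q ∈ homogeneousSubmodule (Fin d) ℂ j ∧
          polyMap d q = Φ d j f) := by
      intro j
      by_cases hj : j < k
      · obtain ⟨q, h1, h2, h3⟩ := IH j hj f hfB ⟨n, hn1, hnJ⟩
        exact ⟨q, fun _ => ⟨h1, h2, h3⟩⟩
      · exact ⟨0, fun h => absurd h hj⟩
    choose Q hQ using hIH
    set P : MvPolynomial (Fin d) ℂ := ∑ j ∈ Finset.range k, Q j with hP
    -- P lies in the radical of Ipoly
    have hPrad : P ∈ (Ipoly J hJ).radical := by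
      apply Ideal.sum_mem
      intro j hj
      exact (hQ j (Finset.mem_range.1 hj)).1
    -- get an honest power of polyMap P inside J
    obtain ⟨m0, hm0⟩ := hPrad
    have hPM : ∃ m, 1 ≤ m ∧ (polyMap d P) ^ m ∈ J := by
      refine ⟨m0 + 1, by omega, ?_⟩
      have : P ^ (m0 + 1) ∈ Ipoly J hJ := by
        rw [pow_succ']
        exact Ideal.mul_mem_left _ _ hm0
      rw [← map_pow]
      exact this
    obtain ⟨m, hm1, hmJ⟩ := hPM
    -- the function g with vanishing low components
    set g : 𝔸 d := f - polyMap d P with hg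
    have hgB : g ∈ ballAlg d := ballAlg_sub_mem hfB (polyMap_mem_ballAlg _)
    -- (-(polyMap P))^m ∈ J
    have hnegP : (-(polyMap d P)) ^ m ∈ J := by
      rcases Nat.even_or_odd m with he | ho
      · rw [he.neg_pow]; exact hmJ
      · rw [ho.neg_pow]; exact J_neg hJ hmJ
    -- g^(n+m) ∈ J
    have hgJ : g ^ (n + m) ∈ J := by
      have : g = f + (-(polyMap d P)) := by rw [hg]; ring
      rw [this]
      exact radJ_add hJ hfB (ballAlg_neg_mem (polyMap_mem_ballAlg _)) hn1 hm1 hnJ hnegP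
    -- components of P
    have hcompP : ∀ j, homogeneousComponent j P = if j < k then Q j else 0 := by
      intro j
      rw [hP, map_sum]
      by_cases hj : j < k
      · rw [if_pos hj]
        rw [Finset.sum_eq_single_of_mem j (Finset.mem_range.2 hj)]
        · rw [homogeneousComponent_of_mem (hQ j hj).2.1, if_pos rfl]
        · intro l hl hne
          rw [homogeneousComponent_of_mem (hQ l (Finset.mem_range.1 hl)).2.1,
            if_neg (fun h => hne h.symm)]
      · rw [if_neg hj]
        apply Finset.sum_eq_zero
        intro l hl
        have hlk := Finset.mem_range.1 hl
        rw [homogeneousComponent_of_mem (hQ l hlk).2.1,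
          if_neg (by omega : ¬ j = l)]
    -- low components of g vanish
    have hvan : ∀ j < k, Φ d j g = 0 := by
      intro j hj
      rw [hg, map_sub, Φ_polyMap, hcompP j, if_pos hj, (hQ j hj).2.2, sub_self]
    -- Φ k g = Φ k f
    have hΦkg : Φ d k g = Φ d k f := by
      rw [hg, map_sub, Φ_polyMap, hcompP k, if_neg (lt_irrefl k), map_zero, sub_zero]
    -- lowest-term argument
    obtain ⟨-, hlow⟩ := pow_lowest hgB k hvan (n + m) (by omega)
    have hpowJ : (Φ d k g) ^ (n + m) ∈ J := by
      rw [← hlow]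
      exact Φ_mem_J hJ hJcl hJhom _ hgJ
    -- get the homogeneous polynomial representing Φ k f
    obtain ⟨q, hqhom, hqeq0⟩ := Φ_mem_Vk k hfB
    have hqeq : polyMap d q = Φ d k f := hqeq0
    refine ⟨q, ?_, hqhom, hqeq⟩
    refine ⟨n + m, ?_⟩
    rw [mem_Ipoly, map_pow, hqeq, ← hΦkg]
    exact hpowJ

lemma comp_pow_rad (hJ : IsIdealOfBallAlg d J) (hJcl : IsClosed J)
    (hJhom : IsHomogBallIdeal d J) {f : 𝔸 d} (hfB : f ∈ ballAlg d)
    (hrad : ∃ n, 1 ≤ n ∧ f ^ n ∈ J) :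
    ∀ m : ℕ, 1 ≤ m → ∀ t : ℕ, ∃ q : MvPolynomial (Fin d) ℂ,
      q ∈ (Ipoly J hJ).radical ^ m ∧ polyMap d q = Φ d t (f ^ m) := by
  have hQ1 : ∀ i : ℕ, ∃ q : MvPolynomial (Fin d) ℂ,
      q ∈ (Ipoly J hJ).radical ∧ polyMap d q = Φ d i f := by
    intro i
    obtain ⟨q, h1, _, h3⟩ := comp_radical hJ hJcl hJhom i f hfB hrad
    exact ⟨q, h1, h3⟩
  choose Q1 hQ1a hQ1b using hQ1
  intro m
  induction m with
  | zero => omega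
  | succ m IH =>
    intro _ t
    by_cases hm : m = 0
    · subst hm
      refine ⟨Q1 t, ?_, ?_⟩
      · rw [zero_add, pow_one]; exact hQ1a t
      · rw [zero_add, pow_one]; exact hQ1b t
    · have hm1 : 1 ≤ m := by omega
      choose Q2 hQ2a hQ2b using IH hm1
      have hmul : Φ d t (f^(m+1)) = ∑ x ∈ Finset.HasAntidiagonal.antidiagonal t,
          Φ d x.1 f * Φ d x.2 (f^m) := by
        rw [pow_succ, mul_comm (f^m) f]
        exact Φ_mul t hfB (ballAlg_pow_mem hfB m)
      refine ⟨∑ x ∈ Finset.HasAntidiagonal.antidiagonal t, Q1 x.1 * Q2 x.2, ?_, ?_⟩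
      · apply Ideal.sum_mem
        intro x _
        rw [pow_succ']
        exact Ideal.mul_mem_mul (hQ1a x.1) (hQ2a x.2)
      · rw [map_sum, hmul]
        exact Finset.sum_congr rfl fun x _ => by rw [map_mul, hQ1b, hQ2b]

end Stmt12

/-- The radical `√J = {f ∈ B : f^n ∈ J for some n ≥ 1}` of a
closed homogeneous ideal `J` of the ball algebra is closed in the norm topology. -/
theorem stmt12 (d : ℕ) (J : Set C(CBall d, ℂ))
    (hJ : IsIdealOfBallAlg d J) (hJcl : IsClosed J) (hJhom : IsHomogBallIdeal d J) :
    IsClosed {f : C(CBall d, ℂ) | f ∈ ballAlg d ∧ ∃ n : ℕ, 1 ≤ n ∧ f ^ n ∈ J} := by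
  obtain ⟨N, hN1, hNle⟩ := Stmt12.exists_N (Stmt12.Ipoly J hJ)
  have hset : {f : C(CBall d, ℂ) | f ∈ ballAlg d ∧ ∃ n : ℕ, 1 ≤ n ∧ f ^ n ∈ J}
      = ballAlg d ∩ (fun f : C(CBall d, ℂ) => f ^ N) ⁻¹' J := by
    ext f
    simp only [Set.mem_setOf_eq, Set.mem_inter_iff, Set.mem_preimage]
    constructor
    · rintro ⟨hfB, hn⟩
      refine ⟨hfB, ?_⟩
      apply Stmt12.mem_J_of_components hJ hJcl (Stmt12.ballAlg_pow_mem hfB N)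
      intro t
      obtain ⟨q, hq1, hq2⟩ := Stmt12.comp_pow_rad hJ hJcl hJhom hfB hn N hN1 t
      rw [← hq2]
      exact hNle hq1
    · rintro ⟨hfB, hN⟩
      exact ⟨hfB, N, hN1, hN⟩
  rw [hset]
  exact Stmt12.ballAlg_closed.inter (hJcl.preimage (continuous_pow N))
end
end

section
/- Let I ⊆ ℂ[z₁,…,z_d] be a radical homogeneous ideal, let B be the ball algebra on the closed unit ball of ℂ^d, and let J be the closure in B of the set of restrictions ι(p) of polynomials p ∈ I. Then J is a radical ideal of B: if f ∈ B and f^n ∈ J for some n ≥ 1, then f ∈ J. -/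
open MvPolynomial Metric

noncomputable section

/-- An ideal of polynomials is homogeneous if it contains the homogeneous
components of each of its elements. -/
def IsHomogeneousIdeal {d : ℕ} (I : Ideal (MvPolynomial (Fin d) ℂ)) : Prop :=
  ∀ p ∈ I, ∀ n : ℕ, homogeneousComponent n p ∈ I

variable {d : ℕ}

def pt (z : CBall d) : Fin d → ℂ := fun i => (z : Cd d) i

lemma polyMap_apply (p : MvPolynomial (Fin d) ℂ) (z : CBall d) :
    polyMap d p z = eval (pt z) p := by
  induction p using MvPolynomial.induction_on with
  | C a => simp [polyMap, pt]
  | add p q hp hq => simp [map_add, hp, hq]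
  | mul_X p i hp =>
    rw [map_mul, ContinuousMap.mul_apply, hp]
    simp [polyMap, coordFn, pt]

lemma pt_dilate (t : ℂ) (ht : ‖t‖ ≤ 1) (z : CBall d) :
    pt (dilatePt d t ht z) = t • pt z := rfl

lemma isHomog_eval_smul {φ : MvPolynomial (Fin d) ℂ} {n : ℕ} (hφ : φ.IsHomogeneous n)
    (c : ℂ) (x : Fin d → ℂ) : eval (c • x) φ = c ^ n * eval x φ := by
  rw [eval_eq, eval_eq, Finset.mul_sum]
  refine Finset.sum_congr rfl fun s hs => ?_
  have hdeg : ∑ i ∈ s.support, s i = n := by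
    have := hφ (mem_support_iff.mp hs)
    change Finsupp.weight (fun _ => 1) s = n at this
    rwa [← Finsupp.degree_eq_weight_one, Finsupp.degree] at this
  have h1 : ∏ i ∈ s.support, (c • x) i ^ s i
      = (∏ i ∈ s.support, c ^ s i) * ∏ i ∈ s.support, x i ^ s i := by
    rw [← Finset.prod_mul_distrib]
    exact Finset.prod_congr rfl fun i _ => by simp [mul_pow]
  have h2 : ∏ i ∈ s.support, c ^ s i = c ^ n := by
    rw [Finset.prod_pow_eq_pow_sum, hdeg]
  rw [h1, h2]; ring

lemma eval_smul_expand (c : ℂ) (x : Fin d → ℂ) (q : MvPolynomial (Fin d) ℂ) {N : ℕ}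
    (hN : q.totalDegree < N) :
    eval (c • x) q = ∑ m ∈ Finset.range N, c ^ m * eval x (homogeneousComponent m q) := by
  have h1 : eval (c • x) q
      = ∑ m ∈ Finset.range (q.totalDegree + 1), eval (c • x) (homogeneousComponent m q) := by
    conv_lhs => rw [← sum_homogeneousComponent q]
    rw [map_sum]
  rw [h1]
  rw [Finset.sum_subset (Finset.range_subset_range.mpr hN)
    (fun m _ hm => by
      rw [homogeneousComponent_eq_zero]
      · simp
      · simp only [Finset.mem_range, not_lt] at hm; omega)]
  exact Finset.sum_congr rfl fun m _ =>
    isHomog_eval_smul (homogeneousComponent_isHomogeneous m q) c x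

lemma dilateFn_polyMap (t : ℂ) (ht : ‖t‖ ≤ 1) (q : MvPolynomial (Fin d) ℂ) {N : ℕ}
    (hN : q.totalDegree < N) :
    dilateFn d t ht (polyMap d q) =
      ∑ m ∈ Finset.range N, t ^ m • polyMap d (homogeneousComponent m q) := by
  ext z
  simp only [dilateFn, ContinuousMap.comp_apply, ContinuousMap.coe_sum, Finset.sum_apply,
    ContinuousMap.coe_smul, Pi.smul_apply, smul_eq_mul, polyMap_apply, pt_dilate]
  exact eval_smul_expand t (pt z) q hN

lemma omega_norm_eq (N : ℕ) (j : ℕ) :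
    ‖Complex.exp (2 * Real.pi * Complex.I / N) ^ j‖ = 1 := by
  have h : (2 * Real.pi * Complex.I / N) = ((2 * Real.pi / N : ℝ) : ℂ) * Complex.I := by
    push_cast; ring
  rw [norm_pow, h, Complex.norm_exp_ofReal_mul_I, one_pow]

lemma omega_norm_le (N : ℕ) (j : ℕ) :
    ‖Complex.exp (2 * Real.pi * Complex.I / N) ^ j‖ ≤ 1 :=
  le_of_eq (omega_norm_eq N j)

lemma avg_identity (q : MvPolynomial (Fin d) ℂ) (k N : ℕ) (hk : k < N)
    (hdeg : q.totalDegree < N) (z : CBall d) :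
    (N : ℂ) * polyMap d (homogeneousComponent k q) z =
      ∑ j ∈ Finset.range N,
        (Complex.exp (2 * Real.pi * Complex.I / N) ^ (k * j))⁻¹ *
          polyMap d q (dilatePt d (Complex.exp (2 * Real.pi * Complex.I / N) ^ j)
            (omega_norm_le N j) z) := by
  set ω : ℂ := Complex.exp (2 * Real.pi * Complex.I / N) with hω
  have hN0 : N ≠ 0 := by omega
  have hprim : IsPrimitiveRoot ω N := Complex.isPrimitiveRoot_exp N hN0
  have hω0 : ω ≠ 0 := Complex.exp_ne_zero _
  have hωN : ω ^ N = 1 := hprim.pow_eq_one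
  symm
  calc
    ∑ j ∈ Finset.range N, (ω ^ (k * j))⁻¹ *
        polyMap d q (dilatePt d (ω ^ j) (omega_norm_le N j) z)
      = ∑ j ∈ Finset.range N, ∑ m ∈ Finset.range N,
          (ω ^ m * (ω ^ k)⁻¹) ^ j * eval (pt z) (homogeneousComponent m q) := by
        refine Finset.sum_congr rfl fun j _ => ?_
        rw [polyMap_apply, pt_dilate, eval_smul_expand _ _ _ hdeg, Finset.mul_sum]
        refine Finset.sum_congr rfl fun m _ => ?_
        have : (ω ^ m * (ω ^ k)⁻¹) ^ j = (ω ^ j) ^ m * (ω ^ (k * j))⁻¹ := by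
          rw [mul_pow, ← pow_mul, ← pow_mul, ← inv_pow, ← inv_pow, ← pow_mul]
          ring_nf
        rw [this]; ring
    _ = ∑ m ∈ Finset.range N,
          (∑ j ∈ Finset.range N, (ω ^ m * (ω ^ k)⁻¹) ^ j) *
            eval (pt z) (homogeneousComponent m q) := by
        rw [Finset.sum_comm]
        exact Finset.sum_congr rfl fun m _ => by rw [Finset.sum_mul]
    _ = (N : ℂ) * polyMap d (homogeneousComponent k q) z := by
        rw [Finset.sum_eq_single k]
        · rw [mul_inv_cancel₀ (pow_ne_zero _ hω0)]
          simp [polyMap_apply]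
        · intro m hm hmk
          have hζ1 : ω ^ m * (ω ^ k)⁻¹ ≠ 1 := by
            intro h
            exact hmk (hprim.pow_inj (Finset.mem_range.mp hm) hk
              (by field_simp at h; exact h))
          have hζN : (ω ^ m * (ω ^ k)⁻¹) ^ N = 1 := by
            rw [mul_pow, inv_pow, ← pow_mul, ← pow_mul, mul_comm m N, mul_comm k N,
              pow_mul, pow_mul, hωN, one_pow, one_pow]
            simp
          rw [geom_sum_eq hζ1, hζN, sub_self, zero_div, zero_mul]
        · intro h; exact absurd (Finset.mem_range.mpr hk) h

lemma polyMap_HC_bound (q : MvPolynomial (Fin d) ℂ) (k : ℕ) (z : CBall d) {M : ℝ}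
    (hM : ∀ (t : ℂ) (ht : ‖t‖ ≤ 1), ‖polyMap d q (dilatePt d t ht z)‖ ≤ M) :
    ‖polyMap d (homogeneousComponent k q) z‖ ≤ M := by
  set N : ℕ := max q.totalDegree k + 1 with hN
  have hk : k < N := by omega
  have hdeg : q.totalDegree < N := by omega
  have hid := avg_identity q k N hk hdeg z
  have hNpos : (0 : ℝ) < N := by positivity
  have hnorm : ‖(N : ℂ) * polyMap d (homogeneousComponent k q) z‖ ≤ N * M := by
    rw [hid]
    refine le_trans (norm_sum_le _ _) ?_
    have : ∀ j ∈ Finset.range N,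
        ‖(Complex.exp (2 * Real.pi * Complex.I / N) ^ (k * j))⁻¹ *
          polyMap d q (dilatePt d (Complex.exp (2 * Real.pi * Complex.I / N) ^ j)
            (omega_norm_le N j) z)‖ ≤ M := by
      intro j _
      rw [norm_mul]
      have h1 : ‖(Complex.exp (2 * Real.pi * Complex.I / N) ^ (k * j))⁻¹‖ = 1 := by
        rw [norm_inv, omega_norm_eq, inv_one]
      rw [h1, one_mul]
      exact hM _ _
    refine le_trans (Finset.sum_le_sum this) ?_
    rw [Finset.sum_const, Finset.card_range, nsmul_eq_mul]
  rw [norm_mul, Complex.norm_natCast] at hnorm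
  exact le_of_mul_le_mul_left hnorm hNpos

lemma polyMap_HC_norm_le (q : MvPolynomial (Fin d) ℂ) (k : ℕ) :
    ‖polyMap d (homogeneousComponent k q)‖ ≤ ‖polyMap d q‖ := by
  rw [ContinuousMap.norm_le _ (norm_nonneg _)]
  intro z
  exact polyMap_HC_bound q k z fun t ht => ContinuousMap.norm_coe_le_norm _ _

lemma zeroLocus_smul_mem {I : Ideal (MvPolynomial (Fin d) ℂ)} (hhom : IsHomogeneousIdeal I)
    {x : Fin d → ℂ} (hx : x ∈ zeroLocus ℂ I) (c : ℂ) : c • x ∈ zeroLocus ℂ I := by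
  intro p hp
  replace hx : ∀ p ∈ I, eval x p = 0 := hx
  change eval (c • x) p = 0
  rw [eval_smul_expand c x p (lt_add_one _)]
  exact Finset.sum_eq_zero fun m _ => by rw [hx _ (hhom p hp m), mul_zero]

lemma vanish_of_mem_J {I : Ideal (MvPolynomial (Fin d) ℂ)} {g : C(CBall d, ℂ)}
    (hg : g ∈ closure (polyMap d '' (I : Set (MvPolynomial (Fin d) ℂ))))
    (z : CBall d) (hz : pt z ∈ zeroLocus ℂ I) : g z = 0 := by
  have hcl : IsClosed {h : C(CBall d, ℂ) | h z = 0} :=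
    isClosed_eq (continuous_eval_const z) continuous_const
  refine closure_minimal ?_ hcl hg
  rintro h ⟨p, hp, rfl⟩
  rw [Set.mem_setOf_eq, polyMap_apply]
  exact hz p hp

lemma polyMap_HC_vanish_bound {I : Ideal (MvPolynomial (Fin d) ℂ)}
    (hhom : IsHomogeneousIdeal I) (q : MvPolynomial (Fin d) ℂ) (k : ℕ)
    {f : C(CBall d, ℂ)} (hf0 : ∀ w : CBall d, pt w ∈ zeroLocus ℂ I → f w = 0)
    (z : CBall d) (hz : pt z ∈ zeroLocus ℂ I) :
    ‖polyMap d (homogeneousComponent k q) z‖ ≤ ‖polyMap d q - f‖ := by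
  refine polyMap_HC_bound q k z fun t ht => ?_
  have hw : pt (dilatePt d t ht z) ∈ zeroLocus ℂ I := by
    rw [pt_dilate]; exact zeroLocus_smul_mem hhom hz t
  have h0 : f (dilatePt d t ht z) = 0 := hf0 _ hw
  calc ‖polyMap d q (dilatePt d t ht z)‖
      = ‖(polyMap d q - f) (dilatePt d t ht z)‖ := by
        rw [ContinuousMap.sub_apply, h0, sub_zero]
    _ ≤ ‖polyMap d q - f‖ := ContinuousMap.norm_coe_le_norm _ _

lemma dilateFn_sub (t : ℂ) (ht : ‖t‖ ≤ 1) (a b : C(CBall d, ℂ)) :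
    dilateFn d t ht (a - b) = dilateFn d t ht a - dilateFn d t ht b := by
  ext z; simp [dilateFn]

lemma dilateFn_norm_le (t : ℂ) (ht : ‖t‖ ≤ 1) (a : C(CBall d, ℂ)) :
    ‖dilateFn d t ht a‖ ≤ ‖a‖ := by
  rw [ContinuousMap.norm_le _ (norm_nonneg _)]
  intro z
  exact ContinuousMap.norm_coe_le_norm a _

lemma dilateFn_one (a : C(CBall d, ℂ)) (h1 : ‖(1 : ℂ)‖ ≤ 1) :
    dilateFn d 1 h1 a = a := by
  ext z
  have : dilatePt d 1 h1 z = z := Subtype.ext (one_smul _ _)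
  simp [dilateFn, this]

instance (k : ℕ) : FiniteDimensional ℂ (homogeneousSubmodule (Fin d) ℂ k) :=
  Submodule.finiteDimensional_of_le (S₂ := restrictTotalDegree (Fin d) ℂ k)
    (fun p hp => (mem_restrictTotalDegree _ _ _).mpr
      ((mem_homogeneousSubmodule _ _).mp hp).totalDegree_le)


set_option maxHeartbeats 1000000 in
/-- If `I` is a radical homogeneous ideal of ℂ[z₁,…,z_d] and `J`
is the closure in the ball algebra `B` of the restrictions of the members of `I`,
then `J` is radical: any `f ∈ B` with `f^n ∈ J` for some `n ≥ 1` lies in `J`. -/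
theorem stmt13 (d : ℕ) (I : Ideal (MvPolynomial (Fin d) ℂ))
    (hrad : I.IsRadical) (hhom : IsHomogeneousIdeal I) :
    ∀ f ∈ ballAlg d,
      (∃ n : ℕ, 1 ≤ n ∧ f ^ n ∈ closure (polyMap d '' (I : Set (MvPolynomial (Fin d) ℂ)))) →
        f ∈ closure (polyMap d '' (I : Set (MvPolynomial (Fin d) ℂ))) := by
  intro f hf hex
  obtain ⟨n, hn, hfn⟩ := hex
  -- f vanishes on the zero set of I
  have hf0 : ∀ z : CBall d, pt z ∈ zeroLocus ℂ I → f z = 0 := by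
    intro z hz
    have h1 : (f ^ n) z = 0 := vanish_of_mem_J hfn z hz
    rw [ContinuousMap.pow_apply] at h1
    exact pow_eq_zero_iff (by omega) |>.mp h1
  -- approximating sequence of polynomials
  obtain ⟨v, hvmem, hvlim⟩ := mem_closure_iff_seq_limit.mp hf
  choose p hp using hvmem
  set ε : ℕ → ℝ := fun j => ‖polyMap d (p j) - f‖ with hεdef
  have hε0 : Filter.Tendsto ε Filter.atTop (nhds 0) := by
    have h1 : Filter.Tendsto (fun j => v j - f) Filter.atTop (nhds 0) := by
      simpa using hvlim.sub (tendsto_const_nhds (x := f))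
    have h2 := h1.norm
    rw [norm_zero] at h2
    convert h2 using 2 with j
    rw [hεdef]; simp [hp j]
  have hεnn : ∀ j, 0 ≤ ε j := fun j => norm_nonneg _
  -- componentwise limits g k
  have hcauchy : ∀ k : ℕ, ∃ g : C(CBall d, ℂ),
      Filter.Tendsto (fun j => polyMap d (homogeneousComponent k (p j)))
        Filter.atTop (nhds g) := by
    intro k
    apply cauchySeq_tendsto_of_complete
    rw [Metric.cauchySeq_iff]
    have hv : CauchySeq v := hvlim.cauchySeq
    rw [Metric.cauchySeq_iff] at hv
    intro δ hδ
    obtain ⟨Nx, hN⟩ := hv δ hδ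
    refine ⟨Nx, fun a ha b hb => lt_of_le_of_lt ?_ (hN a ha b hb)⟩
    rw [dist_eq_norm, dist_eq_norm]
    have h1 : polyMap d (homogeneousComponent k (p a)) - polyMap d (homogeneousComponent k (p b))
        = polyMap d (homogeneousComponent k (p a - p b)) := by
      rw [map_sub, map_sub]
    rw [h1]
    calc ‖polyMap d (homogeneousComponent k (p a - p b))‖
        ≤ ‖polyMap d (p a - p b)‖ := polyMap_HC_norm_le _ _
      _ = ‖v a - v b‖ := by rw [map_sub, hp a, hp b]
  choose g hg using hcauchy
  -- uniform closeness of components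
  have hclose : ∀ k j, ‖polyMap d (homogeneousComponent k (p j)) - g k‖ ≤ ε j := by
    intro k j
    have h1 : Filter.Tendsto
        (fun m => ‖polyMap d (homogeneousComponent k (p j))
          - polyMap d (homogeneousComponent k (p m))‖) Filter.atTop
        (nhds ‖polyMap d (homogeneousComponent k (p j)) - g k‖) :=
      ((tendsto_const_nhds.sub (hg k)).norm)
    have h2 : Filter.Tendsto (fun m => ε j + ε m) Filter.atTop (nhds (ε j + 0)) :=
      tendsto_const_nhds.add hε0
    have h3 : ∀ m, ‖polyMap d (homogeneousComponent k (p j))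
        - polyMap d (homogeneousComponent k (p m))‖ ≤ ε j + ε m := by
      intro m
      have h4 : polyMap d (homogeneousComponent k (p j)) - polyMap d (homogeneousComponent k (p m))
          = polyMap d (homogeneousComponent k (p j - p m)) := by rw [map_sub, map_sub]
      rw [h4]
      calc ‖polyMap d (homogeneousComponent k (p j - p m))‖
          ≤ ‖polyMap d (p j - p m)‖ := polyMap_HC_norm_le _ _
        _ = ‖(polyMap d (p j) - f) + (f - polyMap d (p m))‖ := by rw [map_sub]; ring_nf
        _ ≤ ‖polyMap d (p j) - f‖ + ‖f - polyMap d (p m)‖ := norm_add_le _ _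
        _ = ε j + ε m := by rw [hεdef, norm_sub_rev f]
    have := le_of_tendsto_of_tendsto' h1 h2 h3
    rwa [add_zero] at this
  -- each g k vanishes on the zero set
  have hgZ : ∀ k (z : CBall d), pt z ∈ zeroLocus ℂ I → g k z = 0 := by
    intro k z hz
    have hb : ∀ j, ‖g k z‖ ≤ 2 * ε j := by
      intro j
      calc ‖g k z‖
          ≤ ‖g k z - polyMap d (homogeneousComponent k (p j)) z‖
            + ‖polyMap d (homogeneousComponent k (p j)) z‖ := by
            simpa using norm_add_le
              (g k z - polyMap d (homogeneousComponent k (p j)) z)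
              (polyMap d (homogeneousComponent k (p j)) z)
        _ ≤ ‖g k - polyMap d (homogeneousComponent k (p j))‖ + ε j := by
            gcongr
            · rw [← ContinuousMap.sub_apply]
              exact ContinuousMap.norm_coe_le_norm _ _
            · exact polyMap_HC_vanish_bound hhom (p j) k hf0 z hz
        _ ≤ ε j + ε j := by
            gcongr
            rw [norm_sub_rev]
            exact hclose k j
        _ = 2 * ε j := by ring
    have h2 : Filter.Tendsto (fun j => 2 * ε j) Filter.atTop (nhds 0) := by
      simpa using ((hε0.const_mul 2))
    have h3 : ‖g k z‖ ≤ 0 :=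
      le_of_tendsto_of_tendsto' (tendsto_const_nhds) h2 hb
    simpa using le_antisymm h3 (norm_nonneg _)
  -- homogeneous polynomial representatives
  have hrep : ∀ k : ℕ, ∃ q : MvPolynomial (Fin d) ℂ,
      q.IsHomogeneous k ∧ polyMap d q = g k := by
    intro k
    set S : Submodule ℂ C(CBall d, ℂ) :=
      Submodule.map (polyMap d).toLinearMap (homogeneousSubmodule (Fin d) ℂ k) with hS
    haveI : FiniteDimensional ℂ S := Module.Finite.map _ _
    have hSc : IsClosed (S : Set C(CBall d, ℂ)) := S.closed_of_finiteDimensional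
    have hmem : g k ∈ S := by
      refine hSc.mem_of_tendsto (hg k) (Filter.Eventually.of_forall fun j => ?_)
      exact ⟨homogeneousComponent k (p j), homogeneousComponent_mem _ _, rfl⟩
    obtain ⟨q, hq1, hq2⟩ := hmem
    exact ⟨q, hq1, hq2⟩
  choose q hqhom hqeq using hrep
  -- each q k lies in I
  have hqI : ∀ k, q k ∈ I := by
    intro k
    have hvan : q k ∈ vanishingIdeal ℂ (zeroLocus ℂ I) := by
      rw [mem_vanishingIdeal_iff]
      intro x hx
      set X : Cd d := (EuclideanSpace.equiv (Fin d) ℂ).symm x with hX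
      have hcpos : (0:ℝ) < 1 + ‖X‖ := by positivity
      set c : ℝ := (1 + ‖X‖)⁻¹ with hc
      have hc0 : (0:ℝ) < c := by positivity
      have hmem : (c : ℂ) • X ∈ CBall d := by
        rw [mem_closedBall_zero_iff, norm_smul, Complex.norm_real]
        rw [Real.norm_eq_abs, abs_of_pos hc0, hc]
        rw [inv_mul_le_iff₀ hcpos, mul_one]
        linarith [norm_nonneg X]
      set z : CBall d := ⟨(c : ℂ) • X, hmem⟩ with hzdef
      have hptz : pt z = (c : ℂ) • x := rfl
      have hz : pt z ∈ zeroLocus ℂ I := by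
        rw [hptz]
        exact zeroLocus_smul_mem hhom hx _
      have h0 : g k z = 0 := hgZ k z hz
      rw [← hqeq k, polyMap_apply, hptz, isHomog_eval_smul (hqhom k)] at h0
      have hcne : ((c : ℂ)) ^ k ≠ 0 := pow_ne_zero _ (by exact_mod_cast hc0.ne')
      exact (mul_eq_zero.mp h0).resolve_left hcne
    rwa [vanishingIdeal_zeroLocus_eq_radical, hrad.radical] at hvan
  -- final approximation argument
  rw [Metric.mem_closure_iff]
  intro δ hδ
  have hpick : ∀ r : ℝ, 0 < r → ∃ j, ε j < r := by
    intro r hr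
    rcases Metric.tendsto_atTop.mp hε0 r hr with ⟨N, hN⟩
    refine ⟨N, ?_⟩
    have := hN N le_rfl
    rwa [Real.dist_eq, sub_zero, abs_of_nonneg (hεnn N)] at this
  obtain ⟨j₀, hj₀⟩ := hpick (δ/8) (by linarith)
  set N₀ : ℕ := (p j₀).totalDegree + 1 with hN₀
  set C : ℝ := (∑ k ∈ Finset.range N₀, (k:ℝ)) * ‖polyMap d (p j₀)‖ + 1 with hC
  have hsum0 : (0:ℝ) ≤ ∑ k ∈ Finset.range N₀, (k:ℝ) :=
    Finset.sum_nonneg fun k _ => Nat.cast_nonneg k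
  have hCpos : 0 < C := by
    rw [hC]
    have := mul_nonneg hsum0 (norm_nonneg (polyMap d (p j₀)))
    linarith
  set t : ℝ := max 0 (1 - δ/(8*C)) with ht
  have ht0 : 0 ≤ t := le_max_left _ _
  have ht1 : t < 1 := by
    rw [ht]
    apply max_lt one_pos
    have : 0 < δ/(8*C) := by positivity
    linarith
  have htnorm : ‖(t:ℂ)‖ ≤ 1 := by
    rw [Complex.norm_real, Real.norm_eq_abs, abs_of_nonneg ht0]; exact ht1.le
  have htsub : 1 - t ≤ δ/(8*C) := by
    have := le_max_right 0 (1 - δ/(8*C))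
    rw [ht]; linarith [this]
  have hone : ‖(1:ℂ)‖ ≤ 1 := by norm_num
  -- bound ‖P - P_t‖
  have hPPt : ‖polyMap d (p j₀) - dilateFn d t htnorm (polyMap d (p j₀))‖ ≤ δ/8 := by
    have h2 : polyMap d (p j₀)
        = ∑ k ∈ Finset.range N₀, ((1:ℂ))^k • polyMap d (homogeneousComponent k (p j₀)) := by
      conv_lhs => rw [← dilateFn_one (polyMap d (p j₀)) hone]
      exact dilateFn_polyMap 1 hone _ (by omega)
    have h1 : dilateFn d t htnorm (polyMap d (p j₀))
        = ∑ k ∈ Finset.range N₀, ((t:ℂ))^k • polyMap d (homogeneousComponent k (p j₀)) :=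
      dilateFn_polyMap _ htnorm _ (by omega)
    have hsum : polyMap d (p j₀) - dilateFn d t htnorm (polyMap d (p j₀))
        = ∑ k ∈ Finset.range N₀,
            (((1:ℂ))^k - ((t:ℂ))^k) • polyMap d (homogeneousComponent k (p j₀)) := by
      rw [h1]
      conv_lhs => rw [h2]
      rw [← Finset.sum_sub_distrib]
      exact Finset.sum_congr rfl fun k _ => (sub_smul _ _ _).symm
    rw [hsum]
    refine le_trans (norm_sum_le _ _) ?_
    have hterm : ∀ k ∈ Finset.range N₀,
        ‖(((1:ℂ))^k - ((t:ℂ))^k) • polyMap d (homogeneousComponent k (p j₀))‖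
          ≤ (k:ℝ)*(1-t)*‖polyMap d (p j₀)‖ := by
      intro k _
      rw [norm_smul]
      have hv : ‖polyMap d (homogeneousComponent k (p j₀))‖ ≤ ‖polyMap d (p j₀)‖ :=
        polyMap_HC_norm_le _ _
      have htk : t^k ≤ 1 := pow_le_one₀ ht0 ht1.le
      have hsc : ‖((1:ℂ))^k - ((t:ℂ))^k‖ = 1 - t^k := by
        have hcast : ((1:ℂ))^k - ((t:ℂ))^k = ((1 - t^k : ℝ) : ℂ) := by push_cast; ring
        rw [hcast, Complex.norm_real, Real.norm_eq_abs, abs_of_nonneg (by linarith)]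
      rw [hsc]
      have hbern : 1 - t^k ≤ (k:ℝ)*(1-t) := by
        have h := one_add_mul_le_pow (a := t - 1) (by linarith) k
        have h' : 1 + (k:ℝ)*(t-1) ≤ t^k := by
          calc 1 + (k:ℝ)*(t-1) ≤ (1 + (t-1))^k := h
            _ = t^k := by ring_nf
        nlinarith
      calc (1 - t^k) * ‖polyMap d (homogeneousComponent k (p j₀))‖
          ≤ ((k:ℝ)*(1-t)) * ‖polyMap d (p j₀)‖ := by
            exact mul_le_mul hbern hv (norm_nonneg _)
              (mul_nonneg (Nat.cast_nonneg k) (by linarith))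
        _ = (k:ℝ)*(1-t)*‖polyMap d (p j₀)‖ := by ring
    refine le_trans (Finset.sum_le_sum hterm) ?_
    have heq : ∑ k ∈ Finset.range N₀, (k:ℝ)*(1-t)*‖polyMap d (p j₀)‖
        = (1-t) * ((∑ k ∈ Finset.range N₀, (k:ℝ)) * ‖polyMap d (p j₀)‖) := by
      rw [Finset.sum_mul, Finset.mul_sum]
      exact Finset.sum_congr rfl fun k _ => by ring
    rw [heq]
    have hble : (∑ k ∈ Finset.range N₀, (k:ℝ)) * ‖polyMap d (p j₀)‖ ≤ C := by
      rw [hC]; linarith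
    calc (1-t) * ((∑ k ∈ Finset.range N₀, (k:ℝ)) * ‖polyMap d (p j₀)‖)
        ≤ (δ/(8*C)) * C := by
          apply mul_le_mul htsub hble
            (mul_nonneg hsum0 (norm_nonneg _)) (by positivity)
      _ = δ/8 := by field_simp
  -- bound ‖f - f_t‖
  have hft : ‖f - dilateFn d t htnorm f‖ ≤ 2*(ε j₀) + δ/8 := by
    have hd : f - dilateFn d t htnorm f =
        (f - polyMap d (p j₀))
        + (polyMap d (p j₀) - dilateFn d t htnorm (polyMap d (p j₀)))
        + (dilateFn d t htnorm (polyMap d (p j₀)) - dilateFn d t htnorm f) := by ring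
    rw [hd]
    have hA : ‖f - polyMap d (p j₀)‖ = ε j₀ := by rw [hεdef]; exact norm_sub_rev _ _
    have hB : ‖dilateFn d t htnorm (polyMap d (p j₀)) - dilateFn d t htnorm f‖ ≤ ε j₀ := by
      rw [← dilateFn_sub]
      exact le_trans (dilateFn_norm_le _ _ _) (le_of_eq rfl)
    calc ‖(f - polyMap d (p j₀))
        + (polyMap d (p j₀) - dilateFn d t htnorm (polyMap d (p j₀)))
        + (dilateFn d t htnorm (polyMap d (p j₀)) - dilateFn d t htnorm f)‖
        ≤ ‖(f - polyMap d (p j₀))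
            + (polyMap d (p j₀) - dilateFn d t htnorm (polyMap d (p j₀)))‖
          + ‖dilateFn d t htnorm (polyMap d (p j₀)) - dilateFn d t htnorm f‖ := norm_add_le _ _
      _ ≤ ‖f - polyMap d (p j₀)‖
          + ‖polyMap d (p j₀) - dilateFn d t htnorm (polyMap d (p j₀))‖
          + ‖dilateFn d t htnorm (polyMap d (p j₀)) - dilateFn d t htnorm f‖ := by
            have := norm_add_le (f - polyMap d (p j₀))
              (polyMap d (p j₀) - dilateFn d t htnorm (polyMap d (p j₀)))
            linarith
      _ ≤ 2*(ε j₀) + δ/8 := by rw [hA]; linarith [hPPt, hB]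
  -- choose second index
  have h1t : (0:ℝ) < 1 - t := by linarith
  set K : ℝ := 1 + (1-t)⁻¹ with hK
  have hKpos : 0 < K := by positivity
  obtain ⟨j₁, hj₁⟩ := hpick (δ/(2*K)) (by positivity)
  set N₁ : ℕ := (p j₁).totalDegree + 1 with hN₁
  set b : MvPolynomial (Fin d) ℂ := ∑ k ∈ Finset.range N₁, ((t:ℂ))^k • q k with hb
  have hbI : b ∈ I := Submodule.sum_mem _ fun k _ => Submodule.smul_of_tower_mem _ _ (hqI k)
  have hbval : polyMap d b = ∑ k ∈ Finset.range N₁, ((t:ℂ))^k • g k := by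
    rw [hb, map_sum]
    exact Finset.sum_congr rfl fun k _ => by rw [map_smul, hqeq k]
  -- bound ‖f_t - b‖
  have hgeom : ∑ k ∈ Finset.range N₁, t^k ≤ (1-t)⁻¹ := by
    have htne : t ≠ 1 := by linarith
    rw [geom_sum_eq htne]
    calc (t ^ N₁ - 1) / (t - 1) = (1 - t ^ N₁) / (1 - t) := by
          rw [← neg_div_neg_eq]; ring_nf
      _ ≤ 1 / (1-t) := by
          have hpow : (0:ℝ) ≤ t^N₁ := pow_nonneg ht0 _
          exact (div_le_div_iff_of_pos_right h1t).mpr (by linarith)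
      _ = (1-t)⁻¹ := one_div _
  have hftb : ‖dilateFn d t htnorm f - polyMap d b‖ ≤ (ε j₁) * K := by
    have hsplit : dilateFn d t htnorm f - polyMap d b
        = dilateFn d t htnorm (f - polyMap d (p j₁))
          + (dilateFn d t htnorm (polyMap d (p j₁)) - polyMap d b) := by
      rw [dilateFn_sub]; ring
    have hd1 : ‖dilateFn d t htnorm (f - polyMap d (p j₁))‖ ≤ ε j₁ := by
      refine le_trans (dilateFn_norm_le _ _ _) ?_
      rw [hεdef]
      exact le_of_eq (norm_sub_rev _ _)
    have hexp : dilateFn d t htnorm (polyMap d (p j₁))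
        = ∑ k ∈ Finset.range N₁, ((t:ℂ))^k • polyMap d (homogeneousComponent k (p j₁)) :=
      dilateFn_polyMap _ htnorm _ (by omega)
    have hd2 : ‖dilateFn d t htnorm (polyMap d (p j₁)) - polyMap d b‖ ≤ (1-t)⁻¹ * ε j₁ := by
      have hdiff : dilateFn d t htnorm (polyMap d (p j₁)) - polyMap d b
          = ∑ k ∈ Finset.range N₁,
              ((t:ℂ))^k • (polyMap d (homogeneousComponent k (p j₁)) - g k) := by
        rw [hexp, hbval, ← Finset.sum_sub_distrib]
        exact Finset.sum_congr rfl fun k _ => (smul_sub _ _ _).symm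
      rw [hdiff]
      refine le_trans (norm_sum_le _ _) ?_
      have hterm : ∀ k ∈ Finset.range N₁,
          ‖((t:ℂ))^k • (polyMap d (homogeneousComponent k (p j₁)) - g k)‖ ≤ t^k * ε j₁ := by
        intro k _
        rw [norm_smul, norm_pow, Complex.norm_real, Real.norm_eq_abs, abs_of_nonneg ht0]
        exact mul_le_mul_of_nonneg_left (hclose k j₁) (pow_nonneg ht0 _)
      refine le_trans (Finset.sum_le_sum hterm) ?_
      rw [← Finset.sum_mul]
      exact mul_le_mul_of_nonneg_right hgeom (hεnn j₁)
    calc ‖dilateFn d t htnorm f - polyMap d b‖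
        ≤ ‖dilateFn d t htnorm (f - polyMap d (p j₁))‖
          + ‖dilateFn d t htnorm (polyMap d (p j₁)) - polyMap d b‖ := by
          rw [hsplit]; exact norm_add_le _ _
      _ ≤ ε j₁ + (1-t)⁻¹ * ε j₁ := by linarith [hd1, hd2]
      _ = (ε j₁) * K := by rw [hK]; ring
  refine ⟨polyMap d b, ⟨b, hbI, rfl⟩, ?_⟩
  rw [dist_eq_norm]
  have hjb : (ε j₁) * K < δ/2 := by
    have h := mul_lt_mul_of_pos_right hj₁ hKpos
    have heq2 : (δ/(2*K)) * K = δ/2 := by field_simp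
    rwa [heq2] at h
  calc ‖f - polyMap d b‖
      ≤ ‖f - dilateFn d t htnorm f‖ + ‖dilateFn d t htnorm f - polyMap d b‖ := by
        have : f - polyMap d b = (f - dilateFn d t htnorm f)
          + (dilateFn d t htnorm f - polyMap d b) := by ring
        rw [this]; exact norm_add_le _ _
    _ ≤ (2*(ε j₀) + δ/8) + (ε j₁) * K := add_le_add hft hftb
    _ < δ := by linarith [hj₀, hjb]
end
end
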